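/- arXiv:1404.2565 — 10 statements merged into one kernel-verified Lean document; each statement's English description precedes it below -/
import Mathlib

section
/- The relation ~ is an equivalence relation on {1,…,n}. That is: i ~ i for all i; i ~ j implies j ~ i; and if i ~ j and j ~ k then i ~ k. -/
/-!
Write `A i j` for "`σ'_{ij}` is non-constant". Evaluating the Levi-Civita identity where one
derivative vanishes identically leaves a single product, whose last factor
`σ_{ab}(s) + σ_{ba}(t)` never vanishes. This gives two rules for distinct indices:
`A i j` and `A j k` force `A i k`, and `A i j` and `A k j` force `A i k` or `A k i`.
So the reflexive closure of `A` is a preorder in which the predecessors of any index form a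
chain, and `i ~ j` says precisely that `i` and `j` have a common predecessor. In such a
preorder, having a common predecessor is transitive: of the two predecessors witnessing
`i ~ j` and `j ~ k`, both precede `j`, so one precedes the other and serves for `i` and `k`.
-/

open Relation

theorem equivalence_exists_common_pred {ι : Type*} {B : ι → ι → Prop}
    (hrefl : ∀ a, B a a) (htrans : ∀ {a b c}, B a b → B b c → B a c)
    (hchain : ∀ a b c, B a c → B b c → B a b ∨ B b a) :
    Equivalence fun i j => ∃ m, B m i ∧ B m j where
  refl i := ⟨i, hrefl i, hrefl i⟩
  symm := fun ⟨m, hi, hj⟩ => ⟨m, hj, hi⟩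
  trans := by
    rintro i j k ⟨m₁, hm₁i, hm₁j⟩ ⟨m₂, hm₂j, hm₂k⟩
    rcases hchain m₁ m₂ j hm₁j hm₂j with h₁₂ | h₂₁
    · exact ⟨m₁, hm₁i, htrans h₁₂ hm₂k⟩
    · exact ⟨m₂, htrans h₂₁ hm₁i, hm₂k⟩

section ReflGen

variable {ι : Type*} {A : ι → ι → Prop}

theorem reflGen_trans_of_ne
    (htrans : ∀ i j k, i ≠ j → j ≠ k → i ≠ k → A i j → A j k → A i k) {i j k : ι}
    (hij : ReflGen A i j) (hjk : ReflGen A j k) : ReflGen A i k := by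
  rcases hij with _ | hij <;> rcases hjk with _ | hjk
  · exact .refl
  · exact .single hjk
  · exact .single hij
  · by_cases hij' : i = j
    · exact hij' ▸ .single hjk
    by_cases hjk' : j = k
    · exact hjk' ▸ .single hij
    by_cases hik : i = k
    · exact hik ▸ .refl
    exact .single (htrans i j k hij' hjk' hik hij hjk)

theorem reflGen_chain_of_ne
    (hchain : ∀ i j k, i ≠ j → k ≠ j → i ≠ k → A i j → A k j → A i k ∨ A k i)
    (a b c : ι) (hac : ReflGen A a c) (hbc : ReflGen A b c) :
    ReflGen A a b ∨ ReflGen A b a := by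
  rcases hac with _ | hac
  · exact .inr hbc
  rcases hbc with _ | hbc
  · exact .inl (.single hac)
  by_cases hac' : a = c
  · exact .inr (hac' ▸ .single hbc)
  by_cases hbc' : b = c
  · exact .inl (hbc' ▸ .single hac)
  by_cases hab : a = b
  · exact .inl (hab ▸ .refl)
  exact (hchain a c b hac' hbc' hab hac hbc).imp .single .single

theorem exists_common_reflGen_iff (i j : ι) :
    (∃ m, ReflGen A m i ∧ ReflGen A m j) ↔
      i = j ∨ (A i j ∨ A j i) ∨ ∃ k, k ≠ i ∧ k ≠ j ∧ A k i ∧ A k j := by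
  constructor
  · rintro ⟨m, _ | hmi, _ | hmj⟩
    · exact .inl rfl
    · exact .inr (.inl (.inl hmj))
    · exact .inr (.inl (.inr hmi))
    · by_cases hmi' : m = i
      · exact .inr (.inl (.inl (hmi' ▸ hmj)))
      by_cases hmj' : m = j
      · exact .inr (.inl (.inr (hmj' ▸ hmi)))
      exact .inr (.inr ⟨m, hmi', hmj', hmi, hmj⟩)
  · rintro (rfl | (hij | hji) | ⟨k, -, -, hki, hkj⟩)
    · exact ⟨i, .refl, .refl⟩
    · exact ⟨i, .refl, .single hij⟩
    · exact ⟨j, .single hji, .refl⟩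
    · exact ⟨k, .single hki, .single hkj⟩

end ReflGen

section LeviCivita

variable {ι : Type*} {σ σ' : ι → ι → ℝ → ℝ}

theorem nonconst_trans
    (hne : ∀ i j : ι, i ≠ j → ∀ s t : ℝ, σ i j s + σ j i t ≠ 0)
    (heq : ∀ i j k : ι, i ≠ j → j ≠ k → i ≠ k → ∀ s t u : ℝ,
      σ' j i t * σ' k i u * (σ j k t + σ k j u)
        - σ' j i t * σ' k j u * (σ k i u + σ i k s)
        - σ' k i u * σ' j k t * (σ i j s + σ j i t) = 0)
    (i j k : ι) (hij : i ≠ j) (hjk : j ≠ k) (hik : i ≠ k)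
    (hAij : ∃ x, σ' i j x ≠ 0) (hAjk : ∃ x, σ' j k x ≠ 0) : ∃ x, σ' i k x ≠ 0 := by
  obtain ⟨t, ht⟩ := hAij
  obtain ⟨u, hu⟩ := hAjk
  by_contra! hik0
  have key := heq k i j hik.symm hij hjk.symm 0 t u
  rw [hik0 t] at key
  exact mul_ne_zero (mul_ne_zero hu ht) (hne k i hik.symm 0 t) (by linear_combination -key)

theorem nonconst_chain
    (hne : ∀ i j : ι, i ≠ j → ∀ s t : ℝ, σ i j s + σ j i t ≠ 0)
    (heq : ∀ i j k : ι, i ≠ j → j ≠ k → i ≠ k → ∀ s t u : ℝ,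
      σ' j i t * σ' k i u * (σ j k t + σ k j u)
        - σ' j i t * σ' k j u * (σ k i u + σ i k s)
        - σ' k i u * σ' j k t * (σ i j s + σ j i t) = 0)
    (i j k : ι) (hij : i ≠ j) (hkj : k ≠ j) (hik : i ≠ k)
    (hAij : ∃ x, σ' i j x ≠ 0) (hAkj : ∃ x, σ' k j x ≠ 0) :
    (∃ x, σ' i k x ≠ 0) ∨ ∃ x, σ' k i x ≠ 0 := by
  obtain ⟨t, ht⟩ := hAij
  obtain ⟨u, hu⟩ := hAkj
  by_contra! h
  obtain ⟨hik0, hki0⟩ := h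
  have key := heq j i k hij.symm hik hkj.symm 0 t u
  rw [hki0 u, hik0 t] at key
  exact mul_ne_zero (mul_ne_zero ht hu) (hne i k hik t u) (by linear_combination key)

end LeviCivita

theorem connectedness_is_equivalence_general (n : ℕ)
    (σ σ' : Fin n → Fin n → ℝ → ℝ)
    (hne : ∀ i j : Fin n, i ≠ j → ∀ s t : ℝ, σ i j s + σ j i t ≠ 0)
    (heq : ∀ i j k : Fin n, i ≠ j → j ≠ k → i ≠ k → ∀ s t u : ℝ,
      σ' j i t * σ' k i u * (σ j k t + σ k j u)
        - σ' j i t * σ' k j u * (σ k i u + σ i k s)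
        - σ' k i u * σ' j k t * (σ i j s + σ j i t) = 0) :
    Equivalence (fun i j : Fin n =>
      i = j ∨ ((∃ x, σ' i j x ≠ 0) ∨ (∃ x, σ' j i x ≠ 0)) ∨
        ∃ k, k ≠ i ∧ k ≠ j ∧ (∃ x, σ' k i x ≠ 0) ∧ (∃ x, σ' k j x ≠ 0)) := by
  set A : Fin n → Fin n → Prop := fun i j => ∃ x, σ' i j x ≠ 0
  have hequiv := equivalence_exists_common_pred (B := ReflGen A) (fun _ => .refl)
    (reflGen_trans_of_ne (nonconst_trans hne heq)) (reflGen_chain_of_ne (nonconst_chain hne heq))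
  convert hequiv using 3 with i j
  exact (exists_common_reflGen_iff (A := A) i j).symm

/-- The relation `~` (connectedness of coordinates) is an
equivalence relation on `{1,…,n}`, under the hypotheses arising from
substituting Eisenhart's form of an orthogonally separable metric with
diagonal curvature into the second family of Levi-Civita equations. -/
theorem connectedness_is_equivalence (n : ℕ) (hn : 3 ≤ n)
    (σ σ' : Fin n → Fin n → ℝ → ℝ)
    (hderiv : ∀ i j : Fin n, i ≠ j → ∀ x : ℝ, HasDerivAt (σ i j) (σ' i j x) x)
    (hne : ∀ i j : Fin n, i ≠ j → ∀ s t : ℝ, σ i j s + σ j i t ≠ 0)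
    (heq : ∀ i j k : Fin n, i ≠ j → j ≠ k → i ≠ k → ∀ s t u : ℝ,
      σ' j i t * σ' k i u * (σ j k t + σ k j u)
        - σ' j i t * σ' k j u * (σ k i u + σ i k s)
        - σ' k i u * σ' j k t * (σ i j s + σ j i t) = 0) :
    Equivalence (fun i j : Fin n =>
      i = j ∨ ((∃ x, σ' i j x ≠ 0) ∨ (∃ x, σ' j i x ≠ 0)) ∨
        ∃ k, k ≠ i ∧ k ≠ j ∧ (∃ x, σ' k i x ≠ 0) ∧ (∃ x, σ' k j x ≠ 0)) :=
  connectedness_is_equivalence_general n σ σ' hne heq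
end

section
/- If the coordinates are connected (i.e., i ~ j holds for all i,j ∈ {1,…,n}), then there exists at least one index i that is strongly connected to every index j ≠ i. -/
/-!
Write `k → i` when `σ' k i` is not identically zero. If `σ' k i ≡ 0`, the
identity (ii) for `(i, j, k)` reduces to `σ' j i t · σ' k j u · (σ k i u + σ i k s) = 0`,
and the last factor never vanishes; hence `k → j → i` forces `k → i`.
Now take a vertex `v` with the most out-neighbours. If `v` were not strongly connected
to some `m`, connectedness gives `l` with `l → v` and `l → m`; by transitivity `l`
reaches every out-neighbour of `v` other than itself, together with `v` and `m`,
so `l` has strictly more out-neighbours than `v`.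
-/

theorem exists_ne_zero_trans {ι : Type*} {σ σ' : ι → ι → ℝ → ℝ} {i j k : ι}
    (hne : ∀ s t : ℝ, σ k i s + σ i k t ≠ 0)
    (heq : ∀ s t u : ℝ,
      σ' j i t * σ' k i u * (σ j k t + σ k j u)
        - σ' j i t * σ' k j u * (σ k i u + σ i k s)
        - σ' k i u * σ' j k t * (σ i j s + σ j i t) = 0)
    (hkj : ∃ x, σ' k j x ≠ 0) (hji : ∃ x, σ' j i x ≠ 0) : ∃ x, σ' k i x ≠ 0 := by
  obtain ⟨u, hu⟩ := hkj
  obtain ⟨t, ht⟩ := hji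
  refine ⟨u, fun hki => ?_⟩
  have h := heq 0 t u
  rw [hki] at h
  exact mul_ne_zero (mul_ne_zero ht hu) (hne u 0) (by linarith)

section OutNbhd

variable {α : Type*} [Fintype α] [DecidableEq α] (r : α → α → Prop) [DecidableRel r]

def outNbhd (v : α) : Finset α := Finset.univ.filter fun w => w ≠ v ∧ r v w

variable {r}

theorem mem_outNbhd {v w : α} : w ∈ outNbhd r v ↔ w ≠ v ∧ r v w := by
  simp [outNbhd]

theorem card_outNbhd_lt
    (htrans : ∀ i j k, i ≠ j → j ≠ k → i ≠ k → r k j → r j i → r k i)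
    {v m l : α} (hmv : m ≠ v) (hlv : l ≠ v) (hlm : l ≠ m)
    (hrlv : r l v) (hrlm : r l m) (hrvm : ¬ r v m) :
    (outNbhd r v).card < (outNbhd r l).card := by
  have hm : m ∉ outNbhd r v := fun h => hrvm (mem_outNbhd.mp h).2
  have hv : v ∉ insert m (outNbhd r v) := by
    simp only [Finset.mem_insert, mem_outNbhd]
    exact fun h => h.elim hmv.symm fun h => h.1 rfl
  have hsub : insert v (insert m (outNbhd r v)) ⊆ insert l (outNbhd r l) := by
    intro w hw
    rw [Finset.mem_insert, mem_outNbhd]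
    rcases Finset.mem_insert.mp hw with rfl | hw
    · exact .inr ⟨hlv.symm, hrlv⟩
    rcases Finset.mem_insert.mp hw with rfl | hw
    · exact .inr ⟨hlm.symm, hrlm⟩
    obtain ⟨hwv, hrvw⟩ := mem_outNbhd.mp hw
    by_cases hwl : w = l
    · exact .inl hwl
    · exact .inr ⟨hwl, htrans w v l hwv hlv.symm hwl hrlv hrvw⟩
  have hcard := Finset.card_le_card hsub
  rw [Finset.card_insert_of_notMem hv, Finset.card_insert_of_notMem hm] at hcard
  have := Finset.card_insert_le l (outNbhd r l)
  omega

theorem exists_forall_ne_rel_or_rel [Nonempty α]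
    (htrans : ∀ i j k, i ≠ j → j ≠ k → i ≠ k → r k j → r j i → r k i)
    (hconn : ∀ i j, i = j ∨ (r i j ∨ r j i) ∨ ∃ k, k ≠ i ∧ k ≠ j ∧ r k i ∧ r k j) :
    ∃ i, ∀ j, j ≠ i → r i j ∨ r j i := by
  obtain ⟨v, -, hv⟩ :=
    Finset.exists_max_image Finset.univ (fun v => (outNbhd r v).card) Finset.univ_nonempty
  refine ⟨v, fun m hmv => ?_⟩
  by_contra hvm
  rcases hconn v m with h | h | ⟨l, hlv, hlm, hrlv, hrlm⟩
  · exact hmv h.symm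
  · exact hvm h
  · exact (hv l (Finset.mem_univ l)).not_gt <|
      card_outNbhd_lt htrans hmv hlv hlm hrlv hrlm fun h => hvm (.inl h)

end OutNbhd

theorem exists_strongly_connected_of_connected_general (n : ℕ) (hn : 3 ≤ n)
    (σ σ' : Fin n → Fin n → ℝ → ℝ)
    (hne : ∀ i j : Fin n, i ≠ j → ∀ s t : ℝ, σ i j s + σ j i t ≠ 0)
    (heq : ∀ i j k : Fin n, i ≠ j → j ≠ k → i ≠ k → ∀ s t u : ℝ,
      σ' j i t * σ' k i u * (σ j k t + σ k j u)
        - σ' j i t * σ' k j u * (σ k i u + σ i k s)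
        - σ' k i u * σ' j k t * (σ i j s + σ j i t) = 0)
    (hconn : ∀ i j : Fin n,
      i = j ∨ ((∃ x, σ' i j x ≠ 0) ∨ (∃ x, σ' j i x ≠ 0)) ∨
        ∃ k, k ≠ i ∧ k ≠ j ∧ (∃ x, σ' k i x ≠ 0) ∧ (∃ x, σ' k j x ≠ 0)) :
    ∃ i : Fin n, ∀ j : Fin n, j ≠ i →
      ((∃ x, σ' i j x ≠ 0) ∨ (∃ x, σ' j i x ≠ 0)) := by
  classical
  have : Nonempty (Fin n) := ⟨⟨0, by omega⟩⟩
  exact exists_forall_ne_rel_or_rel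
    (fun i j k hij hjk hik => exists_ne_zero_trans (hne k i hik.symm) (heq i j k hij hjk hik))
    hconn

/-- If the coordinates are connected, then there exists at
least one index `i` that is strongly connected to every index `j ≠ i`. -/
theorem exists_strongly_connected_of_connected (n : ℕ) (hn : 3 ≤ n)
    (σ σ' : Fin n → Fin n → ℝ → ℝ)
    (hderiv : ∀ i j : Fin n, i ≠ j → ∀ x : ℝ, HasDerivAt (σ i j) (σ' i j x) x)
    (hne : ∀ i j : Fin n, i ≠ j → ∀ s t : ℝ, σ i j s + σ j i t ≠ 0)
    (heq : ∀ i j k : Fin n, i ≠ j → j ≠ k → i ≠ k → ∀ s t u : ℝ,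
      σ' j i t * σ' k i u * (σ j k t + σ k j u)
        - σ' j i t * σ' k j u * (σ k i u + σ i k s)
        - σ' k i u * σ' j k t * (σ i j s + σ j i t) = 0)
    (hconn : ∀ i j : Fin n,
      i = j ∨ ((∃ x, σ' i j x ≠ 0) ∨ (∃ x, σ' j i x ≠ 0)) ∨
        ∃ k, k ≠ i ∧ k ≠ j ∧ (∃ x, σ' k i x ≠ 0) ∧ (∃ x, σ' k j x ≠ 0)) :
    ∃ i : Fin n, ∀ j : Fin n, j ≠ i →
      ((∃ x, σ' i j x ≠ 0) ∨ (∃ x, σ' j i x ≠ 0)) :=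
  exists_strongly_connected_of_connected_general n hn σ σ' hne heq hconn
end

section
/- Suppose the coordinates are connected (i ~ j for all i,j) but no index is strongly connected to every other index. Let A ⊆ {1,…,n} be nonempty and f ∉ A be such that σ_{if} is constant for every i ∈ A, and assume A ∪ {f} ≠ {1,…,n}. Then there exist a set A' with A ∪ {f} ⊆ A' and an index h ∉ A' such that σ_{ih} is constant for every i ∈ A'. -/
/-! The index `f` is not strongly connected to some `h`, so connectivity provides a third
index `k` with `σ k f` and `σ k h` non-constant. In the three-term identity for a triple
`(i, j, k)` with `σ j i` constant only the last term survives, and `σ i j + σ j i ≠ 0` forces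
`σ' j k ≡ 0` as soon as `σ k i` is non-constant. Applied with `i = f` this makes `σ a k`
constant for all `a ∈ A` and for `a = h`, and applied with `i = h` it makes `σ f k` constant;
so `A' = A ∪ {f, h}` and the index `k` work. -/

section TripleIdentity

variable {ι : Type*} {σ σ' : ι → ι → ℝ → ℝ}

theorem forall_deriv_eq_zero_of_triple_identity
    (hne : ∀ i j : ι, i ≠ j → ∀ s t : ℝ, σ i j s + σ j i t ≠ 0)
    (heq : ∀ i j k : ι, i ≠ j → j ≠ k → i ≠ k → ∀ s t u : ℝ,
      σ' j i t * σ' k i u * (σ j k t + σ k j u)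
        - σ' j i t * σ' k j u * (σ k i u + σ i k s)
        - σ' k i u * σ' j k t * (σ i j s + σ j i t) = 0)
    {i j k : ι} (hij : i ≠ j) (hik : i ≠ k)
    (hji : ∀ t, σ' j i t = 0) (hki : ∃ u, σ' k i u ≠ 0) :
    ∀ t, σ' j k t = 0 := by
  intro t
  obtain ⟨u, hu⟩ := hki
  have hjk : j ≠ k := by
    rintro rfl
    exact hu (hji u)
  have key := heq i j k hij hjk hik 0 t u
  rw [hji t] at key
  have hprod : σ' k i u * σ' j k t * (σ i j 0 + σ j i t) = 0 := by linarith
  simpa [hu, hne i j hij 0 t] using hprod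

theorem exists_common_nonconstant_of_not_stronglyConnected
    (hconn : ∀ i j : ι,
      i = j ∨ ((∃ x, σ' i j x ≠ 0) ∨ (∃ x, σ' j i x ≠ 0)) ∨
        ∃ k, k ≠ i ∧ k ≠ j ∧ (∃ x, σ' k i x ≠ 0) ∧ (∃ x, σ' k j x ≠ 0))
    {i j : ι} (hij : i ≠ j) (hi : ∀ x, σ' i j x = 0) (hj : ∀ x, σ' j i x = 0) :
    ∃ k, k ≠ i ∧ k ≠ j ∧ (∃ x, σ' k i x ≠ 0) ∧ (∃ x, σ' k j x ≠ 0) := by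
  rcases hconn i j with rfl | (⟨x, hx⟩ | ⟨x, hx⟩) | hk
  · exact absurd rfl hij
  · exact absurd (hi x) hx
  · exact absurd (hj x) hx
  · exact hk

end TripleIdentity

theorem claim_enlarge_constant_set_general (n : ℕ)
    (σ σ' : Fin n → Fin n → ℝ → ℝ)
    (hne : ∀ i j : Fin n, i ≠ j → ∀ s t : ℝ, σ i j s + σ j i t ≠ 0)
    (heq : ∀ i j k : Fin n, i ≠ j → j ≠ k → i ≠ k → ∀ s t u : ℝ,
      σ' j i t * σ' k i u * (σ j k t + σ k j u)
        - σ' j i t * σ' k j u * (σ k i u + σ i k s)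
        - σ' k i u * σ' j k t * (σ i j s + σ j i t) = 0)
    (hconn : ∀ i j : Fin n,
      i = j ∨ ((∃ x, σ' i j x ≠ 0) ∨ (∃ x, σ' j i x ≠ 0)) ∨
        ∃ k, k ≠ i ∧ k ≠ j ∧ (∃ x, σ' k i x ≠ 0) ∧ (∃ x, σ' k j x ≠ 0))
    (hnoS : ¬ ∃ i : Fin n, ∀ j : Fin n, j ≠ i →
      ((∃ x, σ' i j x ≠ 0) ∨ (∃ x, σ' j i x ≠ 0)))
    (A : Set (Fin n)) (f : Fin n) (hf : f ∉ A)
    (hconst : ∀ i ∈ A, ∀ x : ℝ, σ' i f x = 0) :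
    ∃ (A' : Set (Fin n)) (h : Fin n), A ∪ {f} ⊆ A' ∧ h ∉ A' ∧
      ∀ i ∈ A', ∀ x : ℝ, σ' i h x = 0 := by
  push Not at hnoS
  obtain ⟨h, hhf, hfh, hhf'⟩ := hnoS f
  obtain ⟨k, hkf, hkh, hkf', hkh'⟩ :=
    exists_common_nonconstant_of_not_stronglyConnected hconn hhf.symm hfh hhf'
  refine ⟨A ∪ {f, h}, k, Set.union_subset_union_right A (by simp), ?_, ?_⟩
  · rintro (hk | rfl | rfl)
    · obtain ⟨x, hx⟩ := hkf'
      exact hx (hconst k hk x)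
    · exact hkf rfl
    · exact hkh rfl
  · rintro i (hi | rfl | rfl)
    · exact forall_deriv_eq_zero_of_triple_identity hne heq (ne_of_mem_of_not_mem hi hf).symm
        hkf.symm (hconst i hi) hkf'
    · exact forall_deriv_eq_zero_of_triple_identity hne heq hhf hkh.symm hfh hkh'
    · exact forall_deriv_eq_zero_of_triple_identity hne heq hhf.symm hkf.symm hhf' hkf'

/-- (Claim in the proof that `S ≠ ∅`.) Suppose the coordinates
are connected but no index is strongly connected to every other index. If
`A ⊆ {1,…,n}` is nonempty, `f ∉ A`, `σ i f` is constant for every `i ∈ A`, and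
`A ∪ {f}` is not the whole index set, then there are a set `A' ⊇ A ∪ {f}` and
an index `h ∉ A'` with `σ i h` constant for every `i ∈ A'`. -/
theorem claim_enlarge_constant_set (n : ℕ) (hn : 3 ≤ n)
    (σ σ' : Fin n → Fin n → ℝ → ℝ)
    (hderiv : ∀ i j : Fin n, i ≠ j → ∀ x : ℝ, HasDerivAt (σ i j) (σ' i j x) x)
    (hne : ∀ i j : Fin n, i ≠ j → ∀ s t : ℝ, σ i j s + σ j i t ≠ 0)
    (heq : ∀ i j k : Fin n, i ≠ j → j ≠ k → i ≠ k → ∀ s t u : ℝ,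
      σ' j i t * σ' k i u * (σ j k t + σ k j u)
        - σ' j i t * σ' k j u * (σ k i u + σ i k s)
        - σ' k i u * σ' j k t * (σ i j s + σ j i t) = 0)
    (hconn : ∀ i j : Fin n,
      i = j ∨ ((∃ x, σ' i j x ≠ 0) ∨ (∃ x, σ' j i x ≠ 0)) ∨
        ∃ k, k ≠ i ∧ k ≠ j ∧ (∃ x, σ' k i x ≠ 0) ∧ (∃ x, σ' k j x ≠ 0))
    (hnoS : ¬ ∃ i : Fin n, ∀ j : Fin n, j ≠ i →
      ((∃ x, σ' i j x ≠ 0) ∨ (∃ x, σ' j i x ≠ 0)))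
    (A : Set (Fin n)) (hA : A.Nonempty) (f : Fin n) (hf : f ∉ A)
    (hconst : ∀ i ∈ A, ∀ x : ℝ, σ' i f x = 0)
    (hnotall : A ∪ {f} ≠ Set.univ) :
    ∃ (A' : Set (Fin n)) (h : Fin n), A ∪ {f} ⊆ A' ∧ h ∉ A' ∧
      ∀ i ∈ A', ∀ x : ℝ, σ' i h x = 0 :=
  claim_enlarge_constant_set_general n σ σ' hne heq hconn hnoS A f hf hconst
end

section
/- Suppose the coordinates are connected (i ~ j for all i,j) and no connecting coordinate exists. Let S be the set of indices strongly connected to every other index. Let B be a nonempty subset of S and j ∉ B be such that σ_{ij} is constant for every i ∈ B, and assume B ∪ {j} ≠ {1,…,n}. Then j ∈ S, and there exists k ∉ B ∪ {j} such that σ_{ik} is constant for every i ∈ B ∪ {j}. -/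
/-!
Every argument specialises the three-term equation at one triple of indices in which some
derivative vanishes identically, so that it collapses to a single product of factors that are
nonzero by hypothesis. If `j` were not strongly connected to some `l`, one such triple with a
`b ∈ B` makes `σ' b l` vanish and another then forces `σ' j b` or `σ' l b` to vanish, against
`b ∈ S`. For the new index, absence of a connecting coordinate gives `m` with `σ' j m ≡ 0`;
then the equation at `(b, m, j)` shows that `σ b m` does not depend on its argument.
-/

section ThreeTermEquation

variable {ι : Type*}

def FunctionalEquation (σ σ' : ι → ι → ℝ → ℝ) : Prop :=
  ∀ i j k : ι, i ≠ j → j ≠ k → i ≠ k → ∀ s t u : ℝ,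
    σ' j i t * σ' k i u * (σ j k t + σ k j u)
      - σ' j i t * σ' k j u * (σ k i u + σ i k s)
      - σ' k i u * σ' j k t * (σ i j s + σ j i t) = 0

def PairSumsNeZero (σ : ι → ι → ℝ → ℝ) : Prop :=
  ∀ i j : ι, i ≠ j → ∀ s t : ℝ, σ i j s + σ j i t ≠ 0

def StronglyConnected (σ' : ι → ι → ℝ → ℝ) (i j : ι) : Prop :=
  (∃ x, σ' i j x ≠ 0) ∨ (∃ x, σ' j i x ≠ 0)

variable {σ σ' : ι → ι → ℝ → ℝ}

theorem StronglyConnected.exists_ne_zero_swap {i j : ι} (h : StronglyConnected σ' i j)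
    (hij : ∀ x, σ' i j x = 0) : ∃ x, σ' j i x ≠ 0 :=
  h.resolve_left fun ⟨x, hx⟩ => hx (hij x)

namespace FunctionalEquation

theorem forall_eq_zero_of_forall_eq_zero (heq : FunctionalEquation σ σ') (hne : PairSumsNeZero σ)
    {a b c : ι} (hab : a ≠ b) (hbc : b ≠ c) (hac : a ≠ c)
    (hca : ∀ x, σ' c a x = 0) (hcb : ∃ u, σ' c b u ≠ 0) : ∀ t, σ' b a t = 0 := by
  intro t
  obtain ⟨u, hu⟩ := hcb
  have h := heq a b c hab hbc hac 0 t u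
  rw [hca u] at h
  have hprod : σ' b a t * (σ' c b u * (σ c a u + σ a c 0)) = 0 := by linear_combination -h
  exact (mul_eq_zero.mp hprod).resolve_right (mul_ne_zero hu (hne c a hac.symm u 0))

theorem not_both_forall_eq_zero (heq : FunctionalEquation σ σ') (hne : PairSumsNeZero σ)
    {a b c : ι} (hab : a ≠ b) (hbc : b ≠ c) (hac : a ≠ c)
    (hbc0 : ∀ x, σ' b c x = 0) (hcb0 : ∀ x, σ' c b x = 0)
    (hba : ∃ t, σ' b a t ≠ 0) (hca : ∃ u, σ' c a u ≠ 0) : False := by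
  obtain ⟨t, ht⟩ := hba
  obtain ⟨u, hu⟩ := hca
  have h := heq a b c hab hbc hac 0 t u
  rw [hbc0 t, hcb0 u] at h
  exact mul_ne_zero (mul_ne_zero ht hu) (hne b c hbc t u) (by linear_combination h)

theorem apply_eq_apply_zero (heq : FunctionalEquation σ σ')
    {b m j : ι} (hbm : b ≠ m) (hmj : m ≠ j) (hbj : b ≠ j)
    (hjm : ∀ x, σ' j m x = 0) (hjb : ∃ u, σ' j b u ≠ 0) (hmj' : ∃ t, σ' m j t ≠ 0)
    (s : ℝ) : σ b m s = σ b m 0 := by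
  obtain ⟨u, hu⟩ := hjb
  obtain ⟨t, ht⟩ := hmj'
  have hs := heq b m j hbm hmj hbj s t u
  have h0 := heq b m j hbm hmj hbj 0 t u
  rw [hjm u] at hs h0
  have hprod : σ' j b u * σ' m j t * (σ b m s - σ b m 0) = 0 := by linear_combination h0 - hs
  exact sub_eq_zero.mp ((mul_eq_zero.mp hprod).resolve_left (mul_ne_zero hu ht))

end FunctionalEquation

theorem hasDerivAt_eq_zero_of_apply_eq {f f' : ℝ → ℝ} (hf : ∀ x, HasDerivAt f (f' x) x)
    (hconst : ∀ s, f s = f 0) (x : ℝ) : f' x = 0 := by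
  have hfun : f = fun _ => f 0 := funext hconst
  exact (hf x).unique (by rw [hfun]; exact hasDerivAt_const x (f 0))

theorem stronglyConnected_of_forall_eq_zero (heq : FunctionalEquation σ σ')
    (hne : PairSumsNeZero σ) {B : Set ι}
    (hBS : ∀ b ∈ B, ∀ l, l ≠ b → StronglyConnected σ' b l) (hB : B.Nonempty)
    {j : ι} (hj : j ∉ B) (hconst : ∀ b ∈ B, ∀ x, σ' b j x = 0) :
    ∀ l, l ≠ j → StronglyConnected σ' j l := by
  have hjB : ∀ b ∈ B, ∃ x, σ' j b x ≠ 0 := fun b hb =>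
    (hBS b hb j fun h => hj (h ▸ hb)).exists_ne_zero_swap (hconst b hb)
  intro l hlj
  by_cases hlB : l ∈ B
  · exact Or.inl (hjB l hlB)
  by_contra hjl
  obtain ⟨hjl0, hlj0⟩ : (∀ x, σ' j l x = 0) ∧ ∀ x, σ' l j x = 0 := by
    simpa [StronglyConnected] using hjl
  obtain ⟨b, hb⟩ := hB
  have hbj : b ≠ j := fun h => hj (h ▸ hb)
  have hlb : l ≠ b := fun h => hlB (h ▸ hb)
  have hbl0 := heq.forall_eq_zero_of_forall_eq_zero hne hlb hbj hlj hjl0 (hjB b hb)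
  exact heq.not_both_forall_eq_zero hne hbj hlj.symm hlb.symm hjl0 hlj0 (hjB b hb)
    ((hBS b hb l hlb).exists_ne_zero_swap hbl0)

end ThreeTermEquation

theorem claim_enlarge_strongly_connected_set_general (n : ℕ)
    (σ σ' : Fin n → Fin n → ℝ → ℝ)
    (hderiv : ∀ i j : Fin n, i ≠ j → ∀ x : ℝ, HasDerivAt (σ i j) (σ' i j x) x)
    (hne : ∀ i j : Fin n, i ≠ j → ∀ s t : ℝ, σ i j s + σ j i t ≠ 0)
    (heq : ∀ i j k : Fin n, i ≠ j → j ≠ k → i ≠ k → ∀ s t u : ℝ,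
      σ' j i t * σ' k i u * (σ j k t + σ k j u)
        - σ' j i t * σ' k j u * (σ k i u + σ i k s)
        - σ' k i u * σ' j k t * (σ i j s + σ j i t) = 0)
    (hnoM : ¬ ∃ a : Fin n, ∀ j : Fin n, j ≠ a → ∃ x, σ' a j x ≠ 0)
    (S : Set (Fin n))
    (hS : S = {i : Fin n | ∀ j : Fin n, j ≠ i →
      ((∃ x, σ' i j x ≠ 0) ∨ (∃ x, σ' j i x ≠ 0))})
    (B : Set (Fin n)) (hBS : B ⊆ S) (hB : B.Nonempty)
    (j : Fin n) (hj : j ∉ B)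
    (hconst : ∀ i ∈ B, ∀ x : ℝ, σ' i j x = 0) :
    j ∈ S ∧ ∃ k : Fin n, k ∉ B ∪ {j} ∧
      ∀ i ∈ B ∪ {j}, ∀ x : ℝ, σ' i k x = 0 := by
  subst hS
  have hjS : ∀ l, l ≠ j → StronglyConnected σ' j l :=
    stronglyConnected_of_forall_eq_zero heq hne hBS hB hj hconst
  obtain ⟨m, hmj, hjm⟩ : ∃ m, m ≠ j ∧ ∀ x, σ' j m x = 0 := by
    by_contra! h
    exact hnoM ⟨j, h⟩
  have hjB : ∀ b ∈ B, ∃ x, σ' j b x ≠ 0 := fun b hb =>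
    (hjS b fun h => hj (h ▸ hb)).resolve_right fun ⟨x, hx⟩ => hx (hconst b hb x)
  have hmB : m ∉ B := fun hm => (hjB m hm).elim fun x hx => hx (hjm x)
  refine ⟨hjS, m, by simp [hmB, hmj], ?_⟩
  rintro i (hi | rfl)
  · have him : i ≠ m := fun h => hmB (h ▸ hi)
    exact hasDerivAt_eq_zero_of_apply_eq (hderiv i m him)
      (FunctionalEquation.apply_eq_apply_zero heq him hmj (fun h => hj (h ▸ hi)) hjm (hjB i hi)
        ((hjS m hmj).exists_ne_zero_swap hjm))
  · exact hjm

/-- (Claim in the proof that `M ≠ ∅`.) Suppose the coordinates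
are connected and there is no connecting coordinate. Let `S` be the set of
indices strongly connected to every other index. If `B ⊆ S` is nonempty,
`j ∉ B`, `σ i j` is constant for every `i ∈ B`, and `B ∪ {j}` is not the whole
index set, then `j ∈ S` and there is `k ∉ B ∪ {j}` with `σ i k` constant for
every `i ∈ B ∪ {j}`. -/
theorem claim_enlarge_strongly_connected_set (n : ℕ) (hn : 3 ≤ n)
    (σ σ' : Fin n → Fin n → ℝ → ℝ)
    (hderiv : ∀ i j : Fin n, i ≠ j → ∀ x : ℝ, HasDerivAt (σ i j) (σ' i j x) x)
    (hne : ∀ i j : Fin n, i ≠ j → ∀ s t : ℝ, σ i j s + σ j i t ≠ 0)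
    (heq : ∀ i j k : Fin n, i ≠ j → j ≠ k → i ≠ k → ∀ s t u : ℝ,
      σ' j i t * σ' k i u * (σ j k t + σ k j u)
        - σ' j i t * σ' k j u * (σ k i u + σ i k s)
        - σ' k i u * σ' j k t * (σ i j s + σ j i t) = 0)
    (hconn : ∀ i j : Fin n,
      i = j ∨ ((∃ x, σ' i j x ≠ 0) ∨ (∃ x, σ' j i x ≠ 0)) ∨
        ∃ k, k ≠ i ∧ k ≠ j ∧ (∃ x, σ' k i x ≠ 0) ∧ (∃ x, σ' k j x ≠ 0))
    (hnoM : ¬ ∃ a : Fin n, ∀ j : Fin n, j ≠ a → ∃ x, σ' a j x ≠ 0)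
    (S : Set (Fin n))
    (hS : S = {i : Fin n | ∀ j : Fin n, j ≠ i →
      ((∃ x, σ' i j x ≠ 0) ∨ (∃ x, σ' j i x ≠ 0))})
    (B : Set (Fin n)) (hBS : B ⊆ S) (hB : B.Nonempty)
    (j : Fin n) (hj : j ∉ B)
    (hconst : ∀ i ∈ B, ∀ x : ℝ, σ' i j x = 0)
    (hnotall : B ∪ {j} ≠ Set.univ) :
    j ∈ S ∧ ∃ k : Fin n, k ∉ B ∪ {j} ∧
      ∀ i ∈ B ∪ {j}, ∀ x : ℝ, σ' i k x = 0 :=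
  claim_enlarge_strongly_connected_set_general n σ σ' hderiv hne heq hnoM S hS B hBS hB j hj hconst
end

section
/- If a is a connecting coordinate (σ_{aj} is non-constant for every j ≠ a) and α is not a connecting coordinate, then σ_{αa} is constant. -/
/-! If `σ'_{αb} ≡ 0` for some `b ≠ α`, the triple relation for `(b, α, a)` loses its first two
terms and reduces to `σ'_{ab}(u) · σ'_{αa}(t) · (σ_{bα}(s) + σ_{αb}(t)) = 0`. Choosing `u` with
`σ'_{ab}(u) ≠ 0`, which exists since `a` is connecting, and using that the last factor never
vanishes, gives `σ'_{αa}(t) = 0` for every `t`. -/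

theorem deriv_eq_zero_of_triple_relation {n : ℕ} {σ σ' : Fin n → Fin n → ℝ → ℝ}
    {i j k : Fin n} {s t u : ℝ}
    (hne : σ i j s + σ j i t ≠ 0)
    (heq : σ' j i t * σ' k i u * (σ j k t + σ k j u)
        - σ' j i t * σ' k j u * (σ k i u + σ i k s)
        - σ' k i u * σ' j k t * (σ i j s + σ j i t) = 0)
    (hji : σ' j i t = 0) (hki : σ' k i u ≠ 0) :
    σ' j k t = 0 := by
  rw [hji] at heq
  have hprod : σ' k i u * σ' j k t * (σ i j s + σ j i t) = 0 := by linarith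
  simpa [hki, hne] using hprod

theorem nonconnecting_constant_toward_connecting_general (n : ℕ)
    (σ σ' : Fin n → Fin n → ℝ → ℝ)
    (hne : ∀ i j : Fin n, i ≠ j → ∀ s t : ℝ, σ i j s + σ j i t ≠ 0)
    (heq : ∀ i j k : Fin n, i ≠ j → j ≠ k → i ≠ k → ∀ s t u : ℝ,
      σ' j i t * σ' k i u * (σ j k t + σ k j u)
        - σ' j i t * σ' k j u * (σ k i u + σ i k s)
        - σ' k i u * σ' j k t * (σ i j s + σ j i t) = 0)
    (a α : Fin n)
    (ha : ∀ j : Fin n, j ≠ a → ∃ x, σ' a j x ≠ 0)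
    (hα : ¬ ∀ j : Fin n, j ≠ α → ∃ x, σ' α j x ≠ 0) :
    ∀ x : ℝ, σ' α a x = 0 := by
  push Not at hα
  obtain ⟨b, hbα, hb0⟩ := hα
  rcases eq_or_ne b a with rfl | hba
  · exact hb0
  have hαa : α ≠ a := by
    rintro rfl
    obtain ⟨x, hx⟩ := ha b hbα
    exact hx (hb0 x)
  intro t
  obtain ⟨u, hu⟩ := ha b hba
  exact deriv_eq_zero_of_triple_relation (hne b α hbα 0 t)
    (heq b α a hbα hαa hba 0 t u) (hb0 t) hu

/-- If `a` is a connecting coordinate and `α` is not a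
connecting coordinate, then `σ α a` is constant. -/
theorem nonconnecting_constant_toward_connecting (n : ℕ) (hn : 3 ≤ n)
    (σ σ' : Fin n → Fin n → ℝ → ℝ)
    (hderiv : ∀ i j : Fin n, i ≠ j → ∀ x : ℝ, HasDerivAt (σ i j) (σ' i j x) x)
    (hne : ∀ i j : Fin n, i ≠ j → ∀ s t : ℝ, σ i j s + σ j i t ≠ 0)
    (heq : ∀ i j k : Fin n, i ≠ j → j ≠ k → i ≠ k → ∀ s t u : ℝ,
      σ' j i t * σ' k i u * (σ j k t + σ k j u)
        - σ' j i t * σ' k j u * (σ k i u + σ i k s)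
        - σ' k i u * σ' j k t * (σ i j s + σ j i t) = 0)
    (a α : Fin n)
    (ha : ∀ j : Fin n, j ≠ a → ∃ x, σ' a j x ≠ 0)
    (hα : ¬ ∀ j : Fin n, j ≠ α → ∃ x, σ' α j x ≠ 0) :
    ∀ x : ℝ, σ' α a x = 0 :=
  nonconnecting_constant_toward_connecting_general n σ σ' hne heq a α ha hα
end

section
/- Let M ⊆ {1,…,n} be the set of connecting coordinates and suppose M is nonempty. Then there exist differentiable functions σ_a : ℝ → ℝ for each a ∈ M, and nowhere-vanishing functions Φ̂_a : ℝ → ℝ for each a ∈ M, such that for every a ∈ M and all (x₁,…,xₙ) ∈ ℝⁿ: ∏_{j≠a} (σ_{aj}(x_a) + σ_{ja}(x_j)) = Φ̂_a(x_a) · ∏_{b∈M, b≠a} (σ_a(x_a) − σ_b(x_b)). -/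
open scoped Classical

/-!
For connecting `a, b, c`, the curvature condition depends on its first variable only through
`σ_{ab}` and `σ_{ac}`; differentiating in it shows that `σ'_{ac}` is a constant multiple of
`σ'_{ab}`, so the functions `σ_{ab}` with `b` connecting are affine in one another. Substituted
back, the curvature condition becomes a linear relation
`F_{jk}(t,u) = A' F_{ik}(s,u) + A F_{ij}(s,t)` between the sums `F_{ij}(s,t) = σ_{ij}(s) + σ_{ji}(t)`.
Normalising the `τ_b` against a pivot `a₀` so that `F_{a₀b} = λ_b (τ_{a₀} - τ_b)`, the relation
through `a₀` forces `F_{ab} = γ_{ab} (τ_a - τ_b)` for all connecting `a ≠ b`. For `j` not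
connecting, some `σ_{jk}` is constant, which makes the curvature condition degenerate and
`σ_{ja}` constant; these factors go into `Φ_a`.
-/

open Finset

lemma eq_const_mul_add_of_hasDerivAt {f g f' g' : ℝ → ℝ} {μ : ℝ}
    (hf : ∀ x, HasDerivAt f (f' x) x) (hg : ∀ x, HasDerivAt g (g' x) x)
    (h : ∀ x, f' x = μ * g' x) (x : ℝ) : f x = μ * g x + (f 0 - μ * g 0) := by
  have hd : ∀ x, HasDerivAt (f - fun y => μ * g y) 0 x := fun x => by
    simpa [h x] using (hf x).sub ((hg x).const_mul μ)
  have := is_const_of_deriv_eq_zero (fun x => (hd x).differentiableAt) (fun x => (hd x).deriv) x 0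
  simp only [Pi.sub_apply] at this
  linarith

lemma exists_ne_apply_zero_of_hasDerivAt {f : ℝ → ℝ} {d x : ℝ} (hf : HasDerivAt f d x)
    (hd : d ≠ 0) : ∃ s, f s ≠ f 0 := by
  by_contra! h
  rw [show f = fun _ => f 0 from funext h] at hf
  exact hd (hf.unique (hasDerivAt_const x _))

variable {ι : Type*}

lemma prod_erase_eq_prod_compl_mul_prod_erase {α : Type*} [CommMonoid α] [Fintype ι]
    [DecidableEq ι] {M : Finset ι} {a : ι} (ha : a ∈ M) (f : ι → α) :
    ∏ j ∈ univ.erase a, f j = (∏ j ∈ Mᶜ, f j) * ∏ j ∈ M.erase a, f j := by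
  have hsdiff : univ.erase a \ M.erase a = Mᶜ := by
    ext j
    by_cases hj : j = a <;> simp [hj, ha]
  rw [← prod_sdiff (erase_subset_erase a (subset_univ M)), hsdiff]

def IsConnecting (σ' : ι → ι → ℝ → ℝ) (i : ι) : Prop :=
  ∀ j, j ≠ i → ∃ x, σ' i j x ≠ 0

def CurvatureCondition (σ σ' : ι → ι → ℝ → ℝ) : Prop :=
  ∀ i j k, i ≠ j → j ≠ k → i ≠ k → ∀ s t u : ℝ,
    σ' j i t * σ' k i u * (σ j k t + σ k j u)
      - σ' j i t * σ' k j u * (σ k i u + σ i k s)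
      - σ' k i u * σ' j k t * (σ i j s + σ j i t) = 0

def HasDiffForm (σ : ι → ι → ℝ → ℝ) (τ : ι → ℝ → ℝ) (a b : ι) : Prop :=
  ∃ γ : ℝ, γ ≠ 0 ∧ ∀ s t, σ a b s + σ b a t = γ * (τ a s - τ b t)

lemma HasDiffForm.symm {σ : ι → ι → ℝ → ℝ} {τ : ι → ℝ → ℝ} {a b : ι}
    (h : HasDiffForm σ τ a b) : HasDiffForm σ τ b a := by
  obtain ⟨γ, hγ, h⟩ := h
  exact ⟨-γ, neg_ne_zero.mpr hγ, fun s t => by linear_combination h t s⟩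

section

variable {σ σ' : ι → ι → ℝ → ℝ}

lemma deriv_triple_sum_eq_zero (hσ : ∀ i j, i ≠ j → ∀ x, HasDerivAt (σ i j) (σ' i j x) x)
    (hcurv : CurvatureCondition σ σ') {i j k : ι} (hij : i ≠ j) (hjk : j ≠ k) (hik : i ≠ k)
    (s t u : ℝ) :
    σ' j i t * σ' k j u * σ' i k s + σ' k i u * σ' j k t * σ' i j s = 0 := by
  have hd : HasDerivAt (fun s => σ' j i t * σ' k i u * (σ j k t + σ k j u)
        - σ' j i t * σ' k j u * (σ k i u + σ i k s) - σ' k i u * σ' j k t * (σ i j s + σ j i t))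
      (0 - σ' j i t * σ' k j u * σ' i k s - σ' k i u * σ' j k t * σ' i j s) s :=
    ((hasDerivAt_const s (σ' j i t * σ' k i u * (σ j k t + σ k j u))).sub
    (((hσ i k hik s).const_add (σ k i u)).const_mul (σ' j i t * σ' k j u))).sub
    (((hσ i j hij s).add_const (σ j i t)).const_mul (σ' k i u * σ' j k t))
  rw [show (fun s => _) = fun _ => (0 : ℝ) from funext (hcurv i j k hij hjk hik · t u)] at hd
  linear_combination -(hd.unique (hasDerivAt_const s 0))

lemma exists_affine_relation (hσ : ∀ i j, i ≠ j → ∀ x, HasDerivAt (σ i j) (σ' i j x) x)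
    (hcurv : CurvatureCondition σ σ') {a b c : ι} (ha : IsConnecting σ' a)
    (hb : IsConnecting σ' b) (hc : IsConnecting σ' c) (hab : a ≠ b) (hac : a ≠ c) :
    ∃ μ C : ℝ, μ ≠ 0 ∧ (∀ s, σ' a c s = μ * σ' a b s) ∧ ∀ s, σ a c s = μ * σ a b s + C := by
  rcases eq_or_ne b c with rfl | hbc
  · exact ⟨1, 0, one_ne_zero, fun s => (one_mul _).symm, fun s => by ring⟩
  obtain ⟨t₀, ht₀⟩ := hb a hab
  obtain ⟨u₀, hu₀⟩ := hc b hbc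
  set μ := -(σ' c a u₀ * σ' b c t₀) / (σ' b a t₀ * σ' c b u₀) with hμ
  have hder : ∀ s, σ' a c s = μ * σ' a b s := fun s => by
    rw [hμ, div_mul_eq_mul_div, eq_div_iff (mul_ne_zero ht₀ hu₀)]
    linear_combination deriv_triple_sum_eq_zero hσ hcurv hab hbc hac s t₀ u₀
  refine ⟨μ, _, ?_, hder, eq_const_mul_add_of_hasDerivAt (hσ a c hac) (hσ a b hab) hder⟩
  intro hμ₀
  obtain ⟨s₀, hs₀⟩ := ha c hac.symm
  exact hs₀ (by simpa [hμ₀] using hder s₀)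

lemma apply_eq_apply_zero_of_not_isConnecting
    (hσ : ∀ i j, i ≠ j → ∀ x, HasDerivAt (σ i j) (σ' i j x) x) (hcurv : CurvatureCondition σ σ') (hne : ∀ i j, i ≠ j → ∀ s t, σ i j s + σ j i t ≠ 0)
    {a j : ι} (ha : IsConnecting σ' a) (hj : ¬ IsConnecting σ' j) (hja : j ≠ a) (t : ℝ) :
    σ j a t = σ j a 0 := by
  obtain ⟨k, hkj, hk⟩ : ∃ k, k ≠ j ∧ ∀ x, σ' j k x = 0 := by
    simpa [IsConnecting] using hj
  have hder : ∀ u, σ' j a u = 0 := fun u => by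
    rcases eq_or_ne k a with rfl | hka
    · exact hk u
    obtain ⟨t₁, ht₁⟩ := ha k hka
    have h := hcurv k a j hka hja.symm hkj 0 t₁ u
    rw [hk u] at h
    have h' : σ' a k t₁ * σ' j a u * (σ j k u + σ k j 0) = 0 := by linear_combination -h
    simpa [ht₁, hne j k hkj.symm u 0] using h'
  exact is_const_of_deriv_eq_zero (fun x => (hσ j a hja x).differentiableAt)
    (fun x => (hσ j a hja x).deriv.trans (hder x)) t 0

lemma exists_linear_relation (hσ : ∀ i j, i ≠ j → ∀ x, HasDerivAt (σ i j) (σ' i j x) x)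
    (hcurv : CurvatureCondition σ σ') {i j k : ι} (hi : IsConnecting σ' i)
    (hj : IsConnecting σ' j) (hk : IsConnecting σ' k) (hij : i ≠ j) (hjk : j ≠ k) (hik : i ≠ k) :
    ∃ A A' : ℝ, A ≠ 0 ∧ ∀ s t u, σ j k t + σ k j u
      = A' * (σ i k s + σ k i u) + A * (σ i j s + σ j i t) := by
  obtain ⟨A, C, hA, hAd, hAC⟩ := exists_affine_relation hσ hcurv hj hi hk hij.symm hjk
  obtain ⟨A', C', -, hA'd, hA'C⟩ := exists_affine_relation hσ hcurv hk hi hj hik.symm hjk.symm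
  obtain ⟨t₁, ht₁⟩ := hj i hij
  obtain ⟨u₁, hu₁⟩ := hk i hik
  refine ⟨A, A', hA, fun s t u => ?_⟩
  have h := hcurv i j k hij hjk hik s t₁ u₁
  rw [hAd t₁, hA'd u₁] at h
  have h₁ : σ j k t₁ + σ k j u₁ - A' * (σ i k s + σ k i u₁) - A * (σ i j s + σ j i t₁) = 0 :=
    (mul_eq_zero.mp (by linear_combination h)).resolve_left (mul_ne_zero ht₁ hu₁)
  -- the left side minus the right side does not depend on `t` and `u`
  linear_combination h₁ + hAC t - hAC t₁ + hA'C u - hA'C u₁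

lemma HasDiffForm.of_pivot (hσ : ∀ i j, i ≠ j → ∀ x, HasDerivAt (σ i j) (σ' i j x) x)
    (hcurv : CurvatureCondition σ σ') {τ : ι → ℝ → ℝ} {a₀ a b : ι}
    (h₀ : IsConnecting σ' a₀) (ha : IsConnecting σ' a) (hb : IsConnecting σ' b)
    (ha₀ : a₀ ≠ a) (hb₀ : a₀ ≠ b) (hab : a ≠ b)
    (hτa : HasDiffForm σ τ a₀ a) (hτb : HasDiffForm σ τ a₀ b) : HasDiffForm σ τ a b := by
  obtain ⟨γa, hγa, hτa⟩ := hτa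
  obtain ⟨γb, hγb, hτb⟩ := hτb
  obtain ⟨A, A', hA, hrel⟩ := exists_linear_relation hσ hcurv h₀ ha hb ha₀ hab hb₀
  obtain ⟨s₁, hs₁⟩ : ∃ s, τ a₀ s ≠ τ a₀ 0 := by
    obtain ⟨x, hx⟩ := h₀ a ha₀.symm
    obtain ⟨s, hs⟩ := exists_ne_apply_zero_of_hasDerivAt (hσ a₀ a ha₀ x) hx
    refine ⟨s, fun h => hs ?_⟩
    linear_combination hτa s 0 - hτa 0 0 + γa * h
  have hcoef : A' * γb + A * γa = 0 := by
    refine (mul_eq_zero.mp ?_).resolve_right (sub_ne_zero.mpr hs₁)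
    linear_combination hrel 0 0 0 - hrel s₁ 0 0 - A' * (hτb s₁ 0 - hτb 0 0)
      - A * (hτa s₁ 0 - hτa 0 0)
  refine ⟨-(A * γa), neg_ne_zero.mpr (mul_ne_zero hA hγa), fun t u => ?_⟩
  linear_combination hrel 0 t u + A' * hτb 0 u + A * hτa 0 t + (τ a₀ 0 - τ b u) * hcoef

lemma exists_hasDiffForm (hσ : ∀ i j, i ≠ j → ∀ x, HasDerivAt (σ i j) (σ' i j x) x)
    (hcurv : CurvatureCondition σ σ') :
    ∃ τ : ι → ℝ → ℝ, (∀ a, Differentiable ℝ (τ a)) ∧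
      ∀ a b, IsConnecting σ' a → IsConnecting σ' b → a ≠ b → HasDiffForm σ τ a b := by
  have hdiff : ∀ i j, i ≠ j → Differentiable ℝ (σ i j) := fun i j hij x =>
    (hσ i j hij x).differentiableAt
  obtain ⟨a₀, b₀, ha₀, hb₀, hab₀⟩ | h :=
    em (∃ a₀ b₀, IsConnecting σ' a₀ ∧ IsConnecting σ' b₀ ∧ a₀ ≠ b₀)
  swap
  · exact ⟨0, fun _ => differentiable_const 0, fun a b ha hb hab => (h ⟨a, b, ha, hb, hab⟩).elim⟩
  have hlm : ∀ b, ∃ l m : ℝ, IsConnecting σ' b → b ≠ a₀ →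
      l ≠ 0 ∧ ∀ s, σ a₀ b s = l * σ a₀ b₀ s + m := by
    intro b
    by_cases hb : IsConnecting σ' b ∧ b ≠ a₀
    · obtain ⟨l, m, hl, -, hlm⟩ := exists_affine_relation hσ hcurv ha₀ hb₀ hb.1 hab₀ hb.2.symm
      exact ⟨l, m, fun _ _ => ⟨hl, hlm⟩⟩
    · exact ⟨1, 0, fun h h' => (hb ⟨h, h'⟩).elim⟩
  choose lam mu hlm using hlm
  set τ : ι → ℝ → ℝ := fun b =>
    if b = a₀ then σ a₀ b₀ else fun u => -(σ b a₀ u + mu b) / lam b with hτ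
  have hpivot : ∀ b, IsConnecting σ' b → b ≠ a₀ → HasDiffForm σ τ a₀ b := by
    intro b hb hba
    obtain ⟨hl, hσb⟩ := hlm b hb hba
    refine ⟨lam b, hl, fun s u => ?_⟩
    simp only [hτ, if_pos rfl, if_neg hba]
    field_simp
    linear_combination hσb s
  refine ⟨τ, fun b => ?_, fun a b ha hb hab => ?_⟩
  · by_cases hb : b = a₀
    · simpa only [hτ, if_pos hb] using hdiff a₀ b₀ hab₀
    · have := hdiff b a₀ hb
      simp only [hτ, if_neg hb]
      fun_prop
  · rcases eq_or_ne a a₀ with rfl | ha₀'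
    · exact hpivot b hb hab.symm
    rcases eq_or_ne b a₀ with rfl | hb₀'
    · exact (hpivot a ha ha₀').symm
    exact .of_pivot hσ hcurv ha₀ ha hb ha₀'.symm hb₀'.symm hab (hpivot a ha ha₀')
      (hpivot b hb hb₀')

end

theorem connecting_coordinates_metric_form_general (n : ℕ)
    (σ σ' : Fin n → Fin n → ℝ → ℝ)
    (hderiv : ∀ i j : Fin n, i ≠ j → ∀ x : ℝ, HasDerivAt (σ i j) (σ' i j x) x)
    (hne : ∀ i j : Fin n, i ≠ j → ∀ s t : ℝ, σ i j s + σ j i t ≠ 0)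
    (heq : ∀ i j k : Fin n, i ≠ j → j ≠ k → i ≠ k → ∀ s t u : ℝ,
      σ' j i t * σ' k i u * (σ j k t + σ k j u)
        - σ' j i t * σ' k j u * (σ k i u + σ i k s)
        - σ' k i u * σ' j k t * (σ i j s + σ j i t) = 0)
    (M : Finset (Fin n))
    (hM : M = Finset.univ.filter (fun i : Fin n =>
      ∀ j : Fin n, j ≠ i → ∃ x, σ' i j x ≠ 0)) :
    ∃ τ Φ : Fin n → ℝ → ℝ,
      (∀ a ∈ M, Differentiable ℝ (τ a)) ∧
      (∀ a ∈ M, ∀ x : ℝ, Φ a x ≠ 0) ∧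
      ∀ a ∈ M, ∀ x : Fin n → ℝ,
        (∏ j ∈ Finset.univ.erase a, (σ a j (x a) + σ j a (x j)))
          = Φ a (x a) * ∏ b ∈ M.erase a, (τ a (x a) - τ b (x b)) := by
  have hmem : ∀ a, a ∈ M ↔ IsConnecting σ' a := fun a => by simp [hM, IsConnecting]
  obtain ⟨τ, hτ, hform⟩ := exists_hasDiffForm hderiv heq
  choose! γ hγ hγτ using hform
  have hcompl : ∀ {a j}, a ∈ M → j ∈ Mᶜ → j ≠ a := fun ha hj h => mem_compl.mp hj (h ▸ ha)
  refine ⟨τ, fun a x => (∏ j ∈ Mᶜ, (σ a j x + σ j a 0)) * ∏ b ∈ M.erase a, γ a b,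
    fun a _ => hτ a, fun a ha x => ?_, fun a ha x => ?_⟩
  · refine mul_ne_zero (prod_ne_zero_iff.mpr fun j hj => hne a j (hcompl ha hj).symm x 0)
      (prod_ne_zero_iff.mpr fun b hb => ?_)
    obtain ⟨hba, hb⟩ := mem_erase.mp hb
    exact hγ a b ((hmem a).mp ha) ((hmem b).mp hb) hba.symm
  · rw [prod_erase_eq_prod_compl_mul_prod_erase ha, mul_assoc, ← prod_mul_distrib]
    congr 1
    · refine prod_congr rfl fun j hj => ?_
      rw [apply_eq_apply_zero_of_not_isConnecting hderiv heq hne ((hmem a).mp ha)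
        (fun h => mem_compl.mp hj ((hmem j).mpr h)) (hcompl ha hj)]
    · refine prod_congr rfl fun b hb => ?_
      obtain ⟨hba, hb⟩ := mem_erase.mp hb
      exact hγτ a b ((hmem a).mp ha) ((hmem b).mp hb) hba.symm _ _

/-- If the set `M` of connecting coordinates is nonempty, then
the metric coefficient of each connecting coordinate `a` factors in Eisenhart's
irreducible form: there are differentiable functions `τ a` and nowhere-vanishing
functions `Φ a` such that
`∏_{j ≠ a} (σ_{aj}(x_a) + σ_{ja}(x_j)) = Φ_a(x_a) ∏_{b ∈ M, b ≠ a} (τ_a(x_a) − τ_b(x_b))`. -/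
theorem connecting_coordinates_metric_form (n : ℕ) (hn : 3 ≤ n)
    (σ σ' : Fin n → Fin n → ℝ → ℝ)
    (hderiv : ∀ i j : Fin n, i ≠ j → ∀ x : ℝ, HasDerivAt (σ i j) (σ' i j x) x)
    (hne : ∀ i j : Fin n, i ≠ j → ∀ s t : ℝ, σ i j s + σ j i t ≠ 0)
    (heq : ∀ i j k : Fin n, i ≠ j → j ≠ k → i ≠ k → ∀ s t u : ℝ,
      σ' j i t * σ' k i u * (σ j k t + σ k j u)
        - σ' j i t * σ' k j u * (σ k i u + σ i k s)
        - σ' k i u * σ' j k t * (σ i j s + σ j i t) = 0)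
    (M : Finset (Fin n))
    (hM : M = Finset.univ.filter (fun i : Fin n =>
      ∀ j : Fin n, j ≠ i → ∃ x, σ' i j x ≠ 0))
    (hMne : M.Nonempty) :
    ∃ τ Φ : Fin n → ℝ → ℝ,
      (∀ a ∈ M, Differentiable ℝ (τ a)) ∧
      (∀ a ∈ M, ∀ x : ℝ, Φ a x ≠ 0) ∧
      ∀ a ∈ M, ∀ x : Fin n → ℝ,
        (∏ j ∈ Finset.univ.erase a, (σ a j (x a) + σ j a (x j)))
          = Φ a (x a) * ∏ b ∈ M.erase a, (τ a (x a) - τ b (x b)) :=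
  connecting_coordinates_metric_form_general n σ σ' hderiv hne heq M hM
end

section
/- Let x, y, z, x', y', z' ∈ ℝ and let a, b, c ∈ ℝ be all nonzero. Suppose the following three equations hold: x'·z·a − x'·y'·b − z·y·c = 0; −x·z·a + x·y'·b − y'·z'·c = 0; −x'·z'·a − x·y·b + z'·y·c = 0. Then x·y·z + x'·y'·z' = 0. -/
theorem levi_civita_determinant_condition_general
    (x y z x' y' z' a b c : ℝ)
    (ha : a ≠ 0)
    (h2 : -(x * z) * a + x * y' * b - y' * z' * c = 0)
    (h3 : -(x' * z') * a - x * y * b + z' * y * c = 0) :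
    x * y * z + x' * y' * z' = 0 := by
  -- `y` times the second equation plus `y'` times the third eliminates `b` and `c`.
  have hsum : a * (x * y * z + x' * y' * z') = 0 := by
    linear_combination (-y) * h2 - y' * h3
  exact (mul_eq_zero.mp hsum).resolve_left ha

/-- The algebraic core of equation (10): if `(a, b, c)` with
`a, b, c` all nonzero solves the linear system given by the three cyclic
permutations of the second Levi-Civita separability condition, then
`x·y·z + x'·y'·z' = 0`. -/
theorem levi_civita_determinant_condition
    (x y z x' y' z' a b c : ℝ)
    (ha : a ≠ 0) (hb : b ≠ 0) (hc : c ≠ 0)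
    (h1 : x' * z * a - x' * y' * b - z * y * c = 0)
    (h2 : -(x * z) * a + x * y' * b - y' * z' * c = 0)
    (h3 : -(x' * z') * a - x * y * b + z' * y * c = 0) :
    x * y * z + x' * y' * z' = 0 :=
  levi_civita_determinant_condition_general x y z x' y' z' a b c ha h2 h3
end

section
/- Let ω ∈ ℝ and let ρ, τ : ℝ → ℝ be twice differentiable functions with τ(x) ≠ 0 and τ'(x) ≠ 0 for all x, satisfying ρ''(x) = −ω·ρ(x), τ''(x) = −ω·τ(x), and ρ'(x)·τ'(x) = −ω·ρ(x)·τ(x) for all x ∈ ℝ. Then the function x ↦ (ρ(x)·ρ'(x))/(τ(x)·τ'(x)) is constant on ℝ; equivalently, writing σ = ρ² and κ = τ², the ratio σ'/κ' is constant. -/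
/-! With `N = ρ ρ'` and `D = τ τ'`, the equations `ρ'' = -ω ρ` and `τ'' = -ω τ` give
`N' = ρ'² - ω ρ²` and `D' = τ'² - ω τ²`, and the Wronskian-type numerator of `(N / D)'`
factors as `N' D - N D' = (ρ' τ' + ω ρ τ) (ρ' τ - ρ τ')`. The mixed equation kills the first
factor, so `N / D` has zero derivative on `ℝ` and is constant. -/

theorem exists_forall_div_eq_of_hasDerivAt {𝕜 : Type*} [RCLike 𝕜] {N D N' D' : 𝕜 → 𝕜}
    (hN : ∀ x, HasDerivAt N (N' x) x) (hD : ∀ x, HasDerivAt D (D' x) x) (hD0 : ∀ x, D x ≠ 0)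
    (hwronskian : ∀ x, N' x * D x = N x * D' x) :
    ∃ c, ∀ x, N x / D x = c := by
  have hdiv (x : 𝕜) : HasDerivAt (fun y => N y / D y) 0 x := by
    simpa [hwronskian x] using (hN x).fun_div (hD x) (hD0 x)
  exact ⟨N 0 / D 0, fun x =>
    is_const_of_deriv_eq_zero (fun y => (hdiv y).differentiableAt) (fun y => (hdiv y).deriv) x 0⟩

theorem hasDerivAt_mul_deriv {f : ℝ → ℝ} (hf : ContDiff ℝ 2 f) (x : ℝ) :
    HasDerivAt (fun y => f y * deriv f y) (deriv f x * deriv f x + f x * deriv (deriv f) x) x :=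
  (hf.differentiable two_ne_zero x).hasDerivAt.mul (hf.differentiable_deriv_two x).hasDerivAt

/-- The key computation in the proof of the KEM Separation
Theorem: for warping functions `ρ`, `τ` of a warped product decomposition of a
space of constant curvature with one-dimensional base (so `ρ'' = −ω·ρ`,
`τ'' = −ω·τ`, `ρ'·τ' = −ω·ρ·τ`, with `τ` and `τ'` nowhere zero), the ratio
`(ρ·ρ')/(τ·τ') = σ'/κ'` (where `σ = ρ²`, `κ = τ²`) is constant. -/
theorem warped_product_sigma_ratio_constant
    (ω : ℝ) (ρ τ : ℝ → ℝ)
    (hρ : ContDiff ℝ 2 ρ) (hτ : ContDiff ℝ 2 τ)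
    (hτ0 : ∀ x : ℝ, τ x ≠ 0) (hτ'0 : ∀ x : ℝ, deriv τ x ≠ 0)
    (hρ'' : ∀ x : ℝ, deriv (deriv ρ) x = -ω * ρ x)
    (hτ'' : ∀ x : ℝ, deriv (deriv τ) x = -ω * τ x)
    (hmix : ∀ x : ℝ, deriv ρ x * deriv τ x = -ω * ρ x * τ x) :
    ∃ c : ℝ, ∀ x : ℝ, (ρ x * deriv ρ x) / (τ x * deriv τ x) = c := by
  refine exists_forall_div_eq_of_hasDerivAt (hasDerivAt_mul_deriv hρ) (hasDerivAt_mul_deriv hτ)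
    (fun x => mul_ne_zero (hτ0 x) (hτ'0 x)) fun x => ?_
  rw [hρ'' x, hτ'' x]
  linear_combination (deriv ρ x * τ x - ρ x * deriv τ x) * hmix x
end

section
/- Let n ≥ 2 and let H₁,…,Hₙ : ℝⁿ → ℝ be smooth positive functions satisfying: (a) for all distinct i, j: ∂_i∂_j log H_i² + (∂_j log H_i²)·(∂_i log H_j²) = 0 identically on ℝⁿ; and (b) for all distinct i, j, k: ∂_j∂_k log H_i² = 0 identically on ℝⁿ. Then there exist functions Φ_i : ℝ → ℝ (for each i) and σ_{ij} : ℝ → ℝ (for each ordered pair of distinct i, j) such that for every i and all (x₁,…,xₙ) ∈ ℝⁿ: H_i(x₁,…,xₙ)² = Φ_i(x_i) · ∏_{j≠i} (σ_{ij}(x_i) + σ_{ji}(x_j)). -/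
open MeasureTheory intervalIntegral Set Function

open Function

variable {n : ℕ}

/-- derivative along a straight line -/
lemma hasDerivAt_line (f : (Fin n → ℝ) → ℝ) (hf : Differentiable ℝ f)
    (y v : Fin n → ℝ) (t : ℝ) :
    HasDerivAt (fun t : ℝ => f (y + t • v)) (fderiv ℝ f (y + t • v) v) t := by
  have hc : HasDerivAt (fun t : ℝ => y + t • v) v t := by
    simpa using ((hasDerivAt_id t).smul_const v).const_add y
  exact (hf _).hasFDerivAt.comp_hasDerivAt t hc

lemma update_eq_line (y : Fin n → ℝ) (k : Fin n) (t : ℝ) :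
    Function.update y k t = (y - y k • (Pi.single k 1 : Fin n → ℝ)) + t • (Pi.single k 1 : Fin n → ℝ) := by
  funext m
  by_cases h : m = k
  · subst h; simp
  · simp [Function.update_of_ne h, Pi.single_apply, h]

lemma hasDerivAt_coordUpdate (f : (Fin n → ℝ) → ℝ) (hf : Differentiable ℝ f)
    (y : Fin n → ℝ) (k : Fin n) (t : ℝ) :
    HasDerivAt (fun t : ℝ => f (Function.update y k t))
      (fderiv ℝ f (Function.update y k t) (Pi.single k 1)) t := by
  have := hasDerivAt_line f hf (y - y k • (Pi.single k 1 : Fin n → ℝ)) (Pi.single k 1) t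
  simp only [← update_eq_line] at this
  exact this

lemma const_of_hasDerivAt_zero (f : ℝ → ℝ) (h : ∀ x, HasDerivAt f 0 x) (a b : ℝ) :
    f a = f b :=
  is_const_of_deriv_eq_zero (fun x => (h x).differentiableAt) (fun x => (h x).deriv) a b

/-- if `f` is invariant under changing coordinates outside `S`, then `f x` only
depends on coordinates in `S`. -/
lemma invariance_aux (f : (Fin n → ℝ) → ℝ) (S : Finset (Fin n))
    (h : ∀ k ∉ S, ∀ x t, f (Function.update x k t) = f x) :
    ∀ (T : Finset (Fin n)) (x y : Fin n → ℝ), (∀ m ∉ T, x m = y m) →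
      (∀ m ∈ S, x m = y m) → f x = f y := by
  intro T
  induction T using Finset.induction_on with
  | empty => intro x y hxy _; congr 1; funext m; exact hxy m (by simp)
  | insert _ _ hk ih =>
    rename_i k T
    intro x y hxy hS
    by_cases hkS : k ∈ S
    · have : f x = f (Function.update y k (x k)) := by
        apply ih
        · intro m hm
          by_cases hmk : m = k
          · subst hmk; simp
          · rw [Function.update_of_ne hmk]
            exact hxy m (by simp [hmk, hm])
        · intro m hm
          by_cases hmk : m = k
          · subst hmk; simp
          · rw [Function.update_of_ne hmk]; exact hS m hm
      rw [this, hS k hkS, Function.update_eq_self]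
    · have h1 : f x = f (Function.update y k (x k)) := by
        apply ih
        · intro m hm
          by_cases hmk : m = k
          · subst hmk; simp
          · rw [Function.update_of_ne hmk]
            exact hxy m (by simp [hmk, hm])
        · intro m hm
          by_cases hmk : m = k
          · subst hmk; simp
          · rw [Function.update_of_ne hmk]; exact hS m hm
      rw [h1, h k hkS _ (x k)]

lemma invariance (f : (Fin n → ℝ) → ℝ) (S : Finset (Fin n))
    (h : ∀ k ∉ S, ∀ x t, f (Function.update x k t) = f x) (x : Fin n → ℝ) :
    f x = f (fun m => if m ∈ S then x m else 0) := by
  apply invariance_aux f S h Finset.univ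
  · intro m hm; simp at hm
  · intro m hm; simp [hm]


lemma intervalIntegral_swap_of_continuous (F : ℝ → ℝ → ℝ)
    (hF : Continuous (Function.uncurry F)) (a b c d : ℝ) :
    (∫ x in a..b, ∫ y in c..d, F x y) = ∫ y in c..d, ∫ x in a..b, F x y := by
  have hint : Integrable (Function.uncurry F)
      ((volume.restrict (Set.uIoc a b)).prod (volume.restrict (Set.uIoc c d))) := by
    rw [Measure.prod_restrict]
    exact ((hF.continuousOn).integrableOn_compact
      ((isCompact_uIcc (a := a) (b := b)).prod (isCompact_uIcc (a := c) (b := d)))).mono_set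
      (Set.prod_mono Set.uIoc_subset_uIcc Set.uIoc_subset_uIcc)
  have key := MeasureTheory.integral_integral_swap hint
  simp only [intervalIntegral_eq_integral_uIoc]
  rw [MeasureTheory.integral_smul, MeasureTheory.integral_smul]
  rw [key, smul_comm]

lemma ftc_right (f : ℝ → ℝ) (hf : Continuous f) (a b : ℝ) :
    HasDerivAt (fun u => ∫ x in a..u, f x) (f b) b :=
  intervalIntegral.integral_hasDerivAt_right (hf.intervalIntegrable _ _)
    (hf.stronglyMeasurableAtFilter _ _) hf.continuousAt

lemma const_of_hasDerivAt_zero' (f : ℝ → ℝ) (h : ∀ x, HasDerivAt f 0 x) (a b : ℝ) :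
    f a = f b :=
  is_const_of_deriv_eq_zero (fun x => (h x).differentiableAt) (fun x => (h x).deriv) a b

/-- The key two-dimensional lemma. -/
lemma key_pair (g h : ℝ → ℝ → ℝ)
    (cg : Continuous (Function.uncurry g)) (ch : Continuous (Function.uncurry h))
    (hgs : ∀ s t, HasDerivAt (fun s' => g s' t) (-(g s t * h s t)) s)
    (hht : ∀ s t, HasDerivAt (fun t' => h s t') (-(g s t * h s t)) t) :
    ∃ P Q : ℝ → ℝ, (∀ s t, 0 < P s + Q t) ∧
      (∀ s t, HasDerivAt (fun t' => Real.log (P s + Q t')) (g s t) t) ∧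
      (∀ s t, HasDerivAt (fun s' => Real.log (P s' + Q t)) (h s t) s) := by
  -- continuity of sections
  have cgs : ∀ s, Continuous fun t => g s t := fun s =>
    cg.comp (Continuous.prodMk_right s)
  have cgt : ∀ t, Continuous fun s => g s t := fun t =>
    cg.comp (Continuous.prodMk continuous_id (continuous_const (y := t))) -- maybe wrong
  have chs : ∀ s, Continuous fun t => h s t := fun s =>
    ch.comp (Continuous.prodMk_right s)
  have cht : ∀ t, Continuous fun s => h s t := fun t =>
    ch.comp (Continuous.prodMk continuous_id (continuous_const (y := t)))
  have cgh : Continuous (Function.uncurry fun s t => -(g s t * h s t)) := by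
    have : (Function.uncurry fun s t => -(g s t * h s t)) =
        fun p => -((Function.uncurry g p) * (Function.uncurry h p)) := rfl
    rw [this]; exact (cg.mul ch).neg
  -- path independence
  have path : ∀ s t, ((∫ σ in (0:ℝ)..s, h σ 0) + ∫ τ in (0:ℝ)..t, g s τ)
      = (∫ σ in (0:ℝ)..s, h σ t) + ∫ τ in (0:ℝ)..t, g 0 τ := by
    intro s t
    have e1 : ∀ σ, h σ t - h σ 0 = ∫ τ in (0:ℝ)..t, -(g σ τ * h σ τ) := by
      intro σ
      rw [intervalIntegral.integral_eq_sub_of_hasDerivAt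
        (f := fun τ => h σ τ) (fun τ _ => hht σ τ)
        (((cgh.comp (Continuous.prodMk_right σ))).intervalIntegrable _ _)]
    have e2 : ∀ τ, g s τ - g 0 τ = ∫ σ in (0:ℝ)..s, -(g σ τ * h σ τ) := by
      intro τ
      rw [intervalIntegral.integral_eq_sub_of_hasDerivAt
        (f := fun σ => g σ τ) (fun σ _ => hgs σ τ)
        ((cgh.comp (Continuous.prodMk continuous_id (continuous_const (y := τ)))).intervalIntegrable _ _)]
    have lhs : (∫ σ in (0:ℝ)..s, h σ t) - (∫ σ in (0:ℝ)..s, h σ 0)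
        = ∫ σ in (0:ℝ)..s, ∫ τ in (0:ℝ)..t, -(g σ τ * h σ τ) := by
      rw [← intervalIntegral.integral_sub ((cht t).intervalIntegrable _ _)
        ((cht 0).intervalIntegrable _ _)]
      exact intervalIntegral.integral_congr fun σ _ => e1 σ
    have rhs : (∫ τ in (0:ℝ)..t, g s τ) - (∫ τ in (0:ℝ)..t, g 0 τ)
        = ∫ τ in (0:ℝ)..t, ∫ σ in (0:ℝ)..s, -(g σ τ * h σ τ) := by
      rw [← intervalIntegral.integral_sub ((cgs s).intervalIntegrable _ _)
        ((cgs 0).intervalIntegrable _ _)]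
      exact intervalIntegral.integral_congr fun τ _ => e2 τ
    have := intervalIntegral_swap_of_continuous _ cgh 0 s 0 t
    rw [this] at lhs
    linarith [lhs, rhs]
  -- the potential
  set w : ℝ → ℝ → ℝ := fun s t => (∫ σ in (0:ℝ)..s, h σ 0) + ∫ τ in (0:ℝ)..t, g s τ with hw
  have hwt : ∀ s t, HasDerivAt (fun t' => w s t') (g s t) t := fun s t =>
    (ftc_right _ (cgs s) 0 t).const_add _
  have hws : ∀ s t, HasDerivAt (fun s' => w s' t) (h s t) s := by
    intro s t
    have : (fun s' => w s' t) = fun s' => (∫ σ in (0:ℝ)..s', h σ t) + ∫ τ in (0:ℝ)..t, g 0 τ := by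
      funext s'; exact path s' t
    rw [this]
    exact (ftc_right _ (cht t) 0 s).add_const _
  set v : ℝ → ℝ → ℝ := fun s t => Real.exp (w s t) with hv
  have hvpos : ∀ s t, 0 < v s t := fun s t => Real.exp_pos _
  have hvt : ∀ s t, HasDerivAt (fun t' => v s t') (g s t * v s t) t := by
    intro s t
    simpa [mul_comm] using (hwt s t).exp
  have hvs : ∀ s t, HasDerivAt (fun s' => v s' t) (h s t * v s t) s := by
    intro s t
    simpa [mul_comm] using (hws s t).exp
  -- g*v is constant in s
  have gv_const : ∀ t s, g s t * v s t = g 0 t * v 0 t := by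
    intro t
    intro s
    apply const_of_hasDerivAt_zero' (fun s => g s t * v s t) _ s 0
    intro s'
    have := (hgs s' t).mul (hvs s' t)
    have e : -(g s' t * h s' t) * v s' t + g s' t * (h s' t * v s' t) = 0 := by ring
    rwa [e] at this
  -- v s t = (v s 0 - v 0 0) + v 0 t
  have vform : ∀ s t, v s t = (v s 0 - v 0 0) + v 0 t := by
    intro s t
    have : ∀ t', v s t' - v 0 t' = v s 0 - v 0 0 := by
      intro t'
      apply const_of_hasDerivAt_zero' (fun t' => v s t' - v 0 t') _ t' 0
      intro t''
      have := (hvt s t'').sub (hvt 0 t'')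
      rwa [gv_const t'' s, sub_self] at this
    linarith [this t]
  refine ⟨fun s => v s 0 - v 0 0, fun t => v 0 t, fun s t => ?_, fun s t => ?_, fun s t => ?_⟩
  · rw [← vform]; exact hvpos s t
  · have e : (fun t' => Real.log ((v s 0 - v 0 0) + v 0 t')) = fun t' => w s t' := by
      funext t'; rw [← vform]; exact Real.log_exp _
    rw [e]; exact hwt s t
  · have e : (fun s' => Real.log ((v s' 0 - v 0 0) + v 0 t)) = fun s' => w s' t := by
      funext s'; rw [← vform]; exact Real.log_exp _
    rw [e]; exact hws s t

variable {n : ℕ}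

lemma pder_contDiff (u : (Fin n → ℝ) → ℝ) (hu : ContDiff ℝ (⊤ : ℕ∞) u) (j : Fin n) :
    ContDiff ℝ (⊤ : ℕ∞) (fun x => fderiv ℝ u x (Pi.single j (1:ℝ))) :=
  (hu.fderiv_right (by simp)).clm_apply contDiff_const

def epoint (n : ℕ) (i j : Fin n) (s t : ℝ) : Fin n → ℝ :=
  s • (Pi.single i 1 : Fin n → ℝ) + t • (Pi.single j 1 : Fin n → ℝ)

lemma continuous_epoint (i j : Fin n) : Continuous fun p : ℝ × ℝ => epoint n i j p.1 p.2 := by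
  unfold epoint
  exact (continuous_fst.smul continuous_const).add (continuous_snd.smul continuous_const)

lemma epoint_apply_left (i j : Fin n) (hij : i ≠ j) (s t : ℝ) : epoint n i j s t i = s := by
  simp [epoint, Pi.single_apply, hij, Ne.symm hij]

lemma epoint_apply_right (i j : Fin n) (hij : i ≠ j) (s t : ℝ) : epoint n i j s t j = t := by
  simp [epoint, Pi.single_apply, hij, Ne.symm hij]

lemma epoint_comm (i j : Fin n) (s t : ℝ) : epoint n i j s t = epoint n j i t s :=
  add_comm _ _

lemma a_depends (u : (Fin n → ℝ) → ℝ) (hu : ContDiff ℝ (⊤ : ℕ∞) u) (i j : Fin n) (hij : i ≠ j)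
    (hb' : ∀ k, k ≠ i → k ≠ j → ∀ x : Fin n → ℝ,
      fderiv ℝ (fun y => fderiv ℝ u y (Pi.single j (1:ℝ))) x (Pi.single k (1:ℝ)) = 0)
    (x : Fin n → ℝ) :
    fderiv ℝ u x (Pi.single j (1:ℝ)) =
      fderiv ℝ u (epoint n i j (x i) (x j)) (Pi.single j (1:ℝ)) := by
  set f : (Fin n → ℝ) → ℝ := fun x => fderiv ℝ u x (Pi.single j (1:ℝ)) with hf
  have fsm : ContDiff ℝ (⊤ : ℕ∞) f := pder_contDiff u hu j
  have fdiff : Differentiable ℝ f := fsm.differentiable (by simp)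
  have hinv : ∀ k ∉ ({i, j} : Finset (Fin n)), ∀ y t, f (Function.update y k t) = f y := by
    intro k hk y t
    simp only [Finset.mem_insert, Finset.mem_singleton, not_or] at hk
    have hd : ∀ t', HasDerivAt (fun t' => f (Function.update y k t')) 0 t' := by
      intro t'
      have h1 := hasDerivAt_coordUpdate f fdiff y k t'
      rwa [show fderiv ℝ f (Function.update y k t') (Pi.single k (1:ℝ)) = 0 from
        hb' k hk.1 hk.2 _] at h1
    have := const_of_hasDerivAt_zero _ hd t (y k)
    simpa [Function.update_eq_self] using this
  have h0 := invariance f {i, j} hinv x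
  have hpt : (fun m => if m ∈ ({i, j} : Finset (Fin n)) then x m else 0)
      = epoint n i j (x i) (x j) := by
    funext m
    simp only [epoint, Pi.add_apply, Pi.smul_apply, Pi.single_apply, smul_eq_mul,
      Finset.mem_insert, Finset.mem_singleton]
    by_cases hmi : m = i
    · subst hmi; simp [hij, Ne.symm hij]
    · by_cases hmj : m = j
      · subst hmj; simp [Ne.symm hij, hmi]
      · simp [hmi, hmj]
  exact h0.trans (congrArg f hpt)

noncomputable def pdu {n : ℕ} (u : Fin n → (Fin n → ℝ) → ℝ) (i j : Fin n) : (Fin n → ℝ) → ℝ :=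
  fun x => fderiv ℝ (u i) x (Pi.single j (1:ℝ))

theorem eisenhart_aux (n : ℕ) (u : Fin n → (Fin n → ℝ) → ℝ)
    (hu : ∀ i, ContDiff ℝ (⊤ : ℕ∞) (u i))
    (ha : ∀ i j : Fin n, i ≠ j → ∀ x : Fin n → ℝ,
      fderiv ℝ (fun y => fderiv ℝ (u i) y (Pi.single j (1:ℝ))) x (Pi.single i (1:ℝ))
        + fderiv ℝ (u i) x (Pi.single j (1:ℝ)) * fderiv ℝ (u j) x (Pi.single i (1:ℝ)) = 0)
    (hb : ∀ i j k : Fin n, i ≠ j → j ≠ k → i ≠ k → ∀ x : Fin n → ℝ,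
      fderiv ℝ (fun y => fderiv ℝ (u i) y (Pi.single k (1:ℝ))) x (Pi.single j (1:ℝ)) = 0) :
    ∃ (Φ : Fin n → ℝ → ℝ) (σ : Fin n → Fin n → ℝ → ℝ),
      ∀ i x, Real.exp (u i x) = Φ i (x i) *
        ∏ j ∈ Finset.univ.erase i, (σ i j (x i) + σ j i (x j)) := by
  have adiff : ∀ i j : Fin n, Differentiable ℝ (pdu u i j) := fun i j =>
    (pder_contDiff _ (hu i) j).differentiable (by simp)
  have haij : ∀ i j : Fin n, i ≠ j → ∀ x,
      fderiv ℝ (pdu u i j) x (Pi.single i (1:ℝ)) = -(pdu u i j x * pdu u j i x) := by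
    intro i j hij x
    have h := ha i j hij x
    unfold pdu
    linarith
  have hdep : ∀ i j : Fin n, i ≠ j → ∀ x,
      pdu u i j x = pdu u i j (epoint n i j (x i) (x j)) := by
    intro i j hij x
    exact a_depends (u i) (hu i) i j hij (fun k hki hkj x' => hb i k j (Ne.symm hki) hkj hij x') x
  have main : ∀ i j : Fin n, i ≠ j → ∃ P Q : ℝ → ℝ, (∀ s t, 0 < P s + Q t) ∧
      (∀ s t, HasDerivAt (fun t' => Real.log (P s + Q t')) (pdu u i j (epoint n i j s t)) t) ∧
      (∀ s t, HasDerivAt (fun s' => Real.log (P s' + Q t)) (pdu u j i (epoint n i j s t)) s) := by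
    intro i j hij
    apply key_pair (fun s t => pdu u i j (epoint n i j s t))
      (fun s t => pdu u j i (epoint n i j s t))
    · exact ((pder_contDiff _ (hu i) j).continuous).comp (continuous_epoint i j)
    · exact ((pder_contDiff _ (hu j) i).continuous).comp (continuous_epoint i j)
    · intro s t
      have hfe : (fun s' => pdu u i j (epoint n i j s' t)) =
          fun s' => pdu u i j ((t • (Pi.single j 1 : Fin n → ℝ)) +
            s' • (Pi.single i 1 : Fin n → ℝ)) := by
        funext s'; rw [epoint_comm]; rfl
      rw [hfe]
      have hl := hasDerivAt_line (pdu u i j) (adiff i j)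
        (t • (Pi.single j 1 : Fin n → ℝ)) (Pi.single i 1) s
      have pe : (t • (Pi.single j 1 : Fin n → ℝ)) + s • (Pi.single i 1 : Fin n → ℝ)
          = epoint n i j s t := add_comm _ _
      rw [pe, haij i j hij (epoint n i j s t)] at hl
      exact hl
    · intro s t
      have hfe : (fun t' => pdu u j i (epoint n i j s t')) =
          fun t' => pdu u j i ((s • (Pi.single i 1 : Fin n → ℝ)) +
            t' • (Pi.single j 1 : Fin n → ℝ)) := rfl
      rw [hfe]
      have hl := hasDerivAt_line (pdu u j i) (adiff j i)
        (s • (Pi.single i 1 : Fin n → ℝ)) (Pi.single j 1) t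
      have pe : (s • (Pi.single i 1 : Fin n → ℝ)) + t • (Pi.single j 1 : Fin n → ℝ)
          = epoint n i j s t := rfl
      rw [pe, haij j i (Ne.symm hij) (epoint n i j s t)] at hl
      rw [show -(pdu u i j (epoint n i j s t) * pdu u j i (epoint n i j s t)) =
        -(pdu u j i (epoint n i j s t) * pdu u i j (epoint n i j s t)) by ring]
      exact hl
  choose P Q h1 h2 h3 using main
  set σ : Fin n → Fin n → ℝ → ℝ := fun i j =>
    if h : i < j then P i j (ne_of_lt h)
    else if h' : j < i then Q j i (ne_of_lt h') else fun _ => 0 with hσ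
  have hσpair : ∀ i j : Fin n, i ≠ j → (∀ s t, 0 < σ i j s + σ j i t) ∧
      (∀ s t, HasDerivAt (fun t' => Real.log (σ i j s + σ j i t'))
        (pdu u i j (epoint n i j s t)) t) := by
    intro i j hij
    rcases lt_or_gt_of_ne hij with hlt | hgt
    · have e1 : σ i j = P i j (ne_of_lt hlt) := by simp [hσ, hlt]
      have e2 : σ j i = Q i j (ne_of_lt hlt) := by
        simp [hσ, asymm hlt, hlt]
      rw [e1, e2]
      exact ⟨h1 i j _, h2 i j _⟩
    · have e1 : σ i j = Q j i (ne_of_lt hgt) := by simp [hσ, asymm hgt, hgt]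
      have e2 : σ j i = P j i (ne_of_lt hgt) := by simp [hσ, hgt]
      rw [e1, e2]
      constructor
      · intro s t
        have := h1 j i (ne_of_lt hgt) t s
        linarith
      · intro s t
        have hder := h3 j i (ne_of_lt hgt) t s
        have ef : (fun t' => Real.log (Q j i (ne_of_lt hgt) s + P j i (ne_of_lt hgt) t'))
            = fun t' => Real.log (P j i (ne_of_lt hgt) t' + Q j i (ne_of_lt hgt) s) := by
          funext t'; rw [add_comm]
        rw [ef, show epoint n i j s t = epoint n j i t s from epoint_comm i j s t]
        exact hder
  refine ⟨fun i c => Real.exp (u i (Pi.single i c) -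
    ∑ j ∈ Finset.univ.erase i, Real.log (σ i j c + σ j i 0)), σ, ?_⟩
  intro i x
  set ρ : (Fin n → ℝ) → ℝ := fun y => u i y -
    ∑ j ∈ Finset.univ.erase i, Real.log (σ i j (y i) + σ j i (y j)) with hρ
  have key : ρ x = ρ (Pi.single i (x i)) := by
    have hinv : ∀ k ∉ ({i} : Finset (Fin n)), ∀ y t, ρ (Function.update y k t) = ρ y := by
      intro k hk y t
      have hki : k ≠ i := by simpa using hk
      have hd : ∀ t', HasDerivAt (fun t' => ρ (Function.update y k t')) 0 t' := by
        intro t'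
        have hu1 : HasDerivAt (fun t' => u i (Function.update y k t'))
            (fderiv ℝ (u i) (Function.update y k t') (Pi.single k 1)) t' :=
          hasDerivAt_coordUpdate (u i) ((hu i).differentiable (by simp)) y k t'
        have hk_mem : k ∈ Finset.univ.erase i := Finset.mem_erase.mpr ⟨hki, Finset.mem_univ k⟩
        have hsum_eq : (fun t' => ∑ j ∈ Finset.univ.erase i,
              Real.log (σ i j ((Function.update y k t') i) + σ j i ((Function.update y k t') j)))
            = fun t' => (∑ j ∈ (Finset.univ.erase i).erase k,
              Real.log (σ i j (y i) + σ j i (y j))) + Real.log (σ i k (y i) + σ k i t') := by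
          funext t'
          rw [← Finset.sum_erase_add _ _ hk_mem]
          congr 1
          · apply Finset.sum_congr rfl
            intro j hj
            have hjk : j ≠ k := (Finset.mem_erase.mp hj).1
            rw [Function.update_of_ne (Ne.symm hki), Function.update_of_ne hjk]
          · rw [Function.update_of_ne (Ne.symm hki), Function.update_self]
        have hd2 : HasDerivAt (fun t' => ∑ j ∈ Finset.univ.erase i,
              Real.log (σ i j ((Function.update y k t') i) + σ j i ((Function.update y k t') j)))
            (pdu u i k (epoint n i k (y i) t')) t' := by
          rw [hsum_eq]
          exact ((hσpair i k (Ne.symm hki)).2 (y i) t').const_add _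
        have hcomb := hu1.sub hd2
        have hval : fderiv ℝ (u i) (Function.update y k t') (Pi.single k 1)
            - pdu u i k (epoint n i k (y i) t') = 0 := by
          have h5 := hdep i k (Ne.symm hki) (Function.update y k t')
          rw [Function.update_of_ne (Ne.symm hki), Function.update_self] at h5
          rw [show fderiv ℝ (u i) (Function.update y k t') (Pi.single k 1)
            = pdu u i k (Function.update y k t') from rfl, h5, sub_self]
        rw [hval] at hcomb
        exact hcomb
      have h0 := const_of_hasDerivAt_zero _ hd t (y k)
      simpa [Function.update_eq_self] using h0
    have h0 := invariance ρ {i} hinv x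
    have hpt : (fun m => if m ∈ ({i} : Finset (Fin n)) then x m else 0) = Pi.single i (x i) := by
      funext m
      by_cases hm : m = i
      · subst hm; simp
      · simp [hm, Pi.single_apply]
    rw [h0, hpt]
  have hprod : Real.exp (∑ j ∈ Finset.univ.erase i, Real.log (σ i j (x i) + σ j i (x j)))
      = ∏ j ∈ Finset.univ.erase i, (σ i j (x i) + σ j i (x j)) := by
    rw [Real.exp_sum]
    apply Finset.prod_congr rfl
    intro j hj
    have hji : j ≠ i := (Finset.mem_erase.mp hj).1
    exact Real.exp_log ((hσpair i j (Ne.symm hji)).1 _ _)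
  have hsplit : Real.exp (u i x) = Real.exp (ρ x) *
      Real.exp (∑ j ∈ Finset.univ.erase i, Real.log (σ i j (x i) + σ j i (x j))) := by
    rw [← Real.exp_add]
    congr 1
    rw [hρ]
    ring
  rw [hsplit, key, hprod]
  congr 2
  rw [hρ]
  simp only [Pi.single_eq_same]
  congr 1
  apply Finset.sum_congr rfl
  intro j hj
  have hji : j ≠ i := (Finset.mem_erase.mp hj).1
  rw [Pi.single_eq_of_ne hji]


/-- Eisenhart's form of an orthogonally separable metric with
diagonal curvature: if the smooth positive functions `H i` satisfy the first
Levi-Civita equations (a) and the conditions `∂_j ∂_k log H_i² = 0` for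
distinct `i, j, k` (b), then
`H_i² = Φ_i(x_i) · ∏_{j ≠ i} (σ_{ij}(x_i) + σ_{ji}(x_j))`. -/
theorem eisenhart_form (n : ℕ) (hn : 2 ≤ n)
    (H : Fin n → (Fin n → ℝ) → ℝ)
    (hsmooth : ∀ i : Fin n, ContDiff ℝ (⊤ : ℕ∞) (H i))
    (hpos : ∀ i : Fin n, ∀ x : Fin n → ℝ, 0 < H i x)
    (ha : ∀ i j : Fin n, i ≠ j → ∀ x : Fin n → ℝ,
      fderiv ℝ (fun y : Fin n → ℝ =>
          fderiv ℝ (fun z : Fin n → ℝ => Real.log (H i z ^ 2)) y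
            (Pi.single j (1 : ℝ))) x (Pi.single i (1 : ℝ))
        + fderiv ℝ (fun z : Fin n → ℝ => Real.log (H i z ^ 2)) x
            (Pi.single j (1 : ℝ))
          * fderiv ℝ (fun z : Fin n → ℝ => Real.log (H j z ^ 2)) x
            (Pi.single i (1 : ℝ)) = 0)
    (hb : ∀ i j k : Fin n, i ≠ j → j ≠ k → i ≠ k → ∀ x : Fin n → ℝ,
      fderiv ℝ (fun y : Fin n → ℝ =>
          fderiv ℝ (fun z : Fin n → ℝ => Real.log (H i z ^ 2)) y
            (Pi.single k (1 : ℝ))) x (Pi.single j (1 : ℝ)) = 0) :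
    ∃ (Φ : Fin n → ℝ → ℝ) (σ : Fin n → Fin n → ℝ → ℝ),
      ∀ i : Fin n, ∀ x : Fin n → ℝ,
        H i x ^ 2 = Φ i (x i) *
          ∏ j ∈ Finset.univ.erase i, (σ i j (x i) + σ j i (x j)) := by
  obtain ⟨Φ, σ, hΦ⟩ := eisenhart_aux n (fun i z => Real.log (H i z ^ 2))
    (fun i => ((hsmooth i).pow 2).log (fun x => ne_of_gt (pow_pos (hpos i x) 2)))
    ha hb
  refine ⟨Φ, σ, fun i x => ?_⟩
  have h := hΦ i x
  rwa [Real.exp_log (pow_pos (hpos i x) 2)] at h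
end

section
/- Let H₁, H₂ : ℝ² → ℝ be smooth positive functions satisfying the Levi-Civita equations: ∂₁∂₂ log H₁² + (∂₂ log H₁²)·(∂₁ log H₂²) = 0 and ∂₁∂₂ log H₂² + (∂₁ log H₂²)·(∂₂ log H₁²) = 0 identically on ℝ². Then there exist functions Φ₁, Φ₂, σ₁, σ₂ : ℝ → ℝ such that for all (x, y) ∈ ℝ²: H₁(x,y)² = Φ₁(x)·(σ₁(x) + σ₂(y)) and H₂(x,y)² = Φ₂(y)·(σ₁(x) + σ₂(y)). -/
noncomputable def Dx' (f : ℝ × ℝ → ℝ) (p : ℝ × ℝ) : ℝ := fderiv ℝ f p (1, 0)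
noncomputable def Dy' (f : ℝ × ℝ → ℝ) (p : ℝ × ℝ) : ℝ := fderiv ℝ f p (0, 1)

lemma hasDerivAt_sliceX {f : ℝ × ℝ → ℝ} (hf : ContDiff ℝ (⊤ : ℕ∞) f) (x y : ℝ) :
    HasDerivAt (fun t => f (t, y)) (Dx' f (x, y)) x := by
  have h1 : HasFDerivAt f (fderiv ℝ f (x, y)) (x, y) :=
    (hf.differentiable (by simp) (x, y)).hasFDerivAt
  have h2 : HasDerivAt (fun t : ℝ => ((t, y) : ℝ × ℝ)) (1, 0) x :=
    (hasDerivAt_id x).prodMk (hasDerivAt_const x y)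
  exact h1.comp_hasDerivAt x h2

lemma hasDerivAt_sliceY {f : ℝ × ℝ → ℝ} (hf : ContDiff ℝ (⊤ : ℕ∞) f) (x y : ℝ) :
    HasDerivAt (fun s => f (x, s)) (Dy' f (x, y)) y := by
  have h1 : HasFDerivAt f (fderiv ℝ f (x, y)) (x, y) :=
    (hf.differentiable (by simp) (x, y)).hasFDerivAt
  have h2 : HasDerivAt (fun s : ℝ => ((x, s) : ℝ × ℝ)) (0, 1) y :=
    (hasDerivAt_const y x).prodMk (hasDerivAt_id y)
  exact h1.comp_hasDerivAt y h2

lemma contDiff_Dx {f : ℝ × ℝ → ℝ} (hf : ContDiff ℝ (⊤ : ℕ∞) f) : ContDiff ℝ (⊤ : ℕ∞) (Dx' f) :=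
  (hf.fderiv_right (by simp)).clm_apply contDiff_const

lemma contDiff_Dy {f : ℝ × ℝ → ℝ} (hf : ContDiff ℝ (⊤ : ℕ∞) f) : ContDiff ℝ (⊤ : ℕ∞) (Dy' f) :=
  (hf.fderiv_right (by simp)).clm_apply contDiff_const

/-- mixed partial zero implies additive separation -/
lemma sep_of_mixed_zero {f : ℝ × ℝ → ℝ} (hf : ContDiff ℝ (⊤ : ℕ∞) f)
    (h0 : ∀ x y : ℝ, deriv (fun u : ℝ => deriv (fun v : ℝ => f (u, v)) y) x = 0)
    (x y : ℝ) : f (x, y) = f (x, 0) + f (0, y) - f (0, 0) := by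
  have hDy := contDiff_Dy hf
  -- first: Dy' f (x, y) = Dy' f (0, y)
  have hconst : ∀ x y : ℝ, Dy' f (x, y) = Dy' f (0, y) := by
    intro x y
    have hdiff : Differentiable ℝ (fun t => Dy' f (t, y)) := fun t =>
      (hasDerivAt_sliceX hDy t y).differentiableAt
    have hz : ∀ t : ℝ, deriv (fun t => Dy' f (t, y)) t = 0 := by
      intro t
      have : (fun u : ℝ => deriv (fun v : ℝ => f (u, v)) y) = fun u => Dy' f (u, y) := by
        funext u; exact (hasDerivAt_sliceY hf u y).deriv
      have h := h0 t y
      rw [this] at h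
      exact h
    exact is_const_of_deriv_eq_zero hdiff hz x 0
  have hdiff2 : Differentiable ℝ (fun s => f (x, s) - f (0, s)) := fun s =>
    ((hasDerivAt_sliceY hf x s).sub (hasDerivAt_sliceY hf 0 s)).differentiableAt
  have hz2 : ∀ s : ℝ, deriv (fun s => f (x, s) - f (0, s)) s = 0 := by
    intro s
    have := ((hasDerivAt_sliceY hf x s).fun_sub (hasDerivAt_sliceY hf 0 s)).deriv
    rw [this, hconst x s]; ring
  have := is_const_of_deriv_eq_zero hdiff2 hz2 y 0
  linarith


/-- In dimension 2, every orthogonally separable metric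
(i.e. one whose diagonal components satisfy the Levi-Civita equations) has the
form associated with a concircular tensor:
`H₁² = Φ₁(x)·(σ₁(x)+σ₂(y))` and `H₂² = Φ₂(y)·(σ₁(x)+σ₂(y))`. -/
theorem two_dim_separable_metric_form (H₁ H₂ : ℝ × ℝ → ℝ)
    (h₁ : ContDiff ℝ (⊤ : ℕ∞) H₁) (h₂ : ContDiff ℝ (⊤ : ℕ∞) H₂)
    (hpos₁ : ∀ p : ℝ × ℝ, 0 < H₁ p) (hpos₂ : ∀ p : ℝ × ℝ, 0 < H₂ p)
    (hLC₁ : ∀ x y : ℝ,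
      deriv (fun u : ℝ => deriv (fun v : ℝ => Real.log (H₁ (u, v) ^ 2)) y) x
        + deriv (fun v : ℝ => Real.log (H₁ (x, v) ^ 2)) y
          * deriv (fun u : ℝ => Real.log (H₂ (u, y) ^ 2)) x = 0)
    (hLC₂ : ∀ x y : ℝ,
      deriv (fun u : ℝ => deriv (fun v : ℝ => Real.log (H₂ (u, v) ^ 2)) y) x
        + deriv (fun u : ℝ => Real.log (H₂ (u, y) ^ 2)) x
          * deriv (fun v : ℝ => Real.log (H₁ (x, v) ^ 2)) y = 0) :
    ∃ Φ₁ Φ₂ σ₁ σ₂ : ℝ → ℝ, ∀ x y : ℝ,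
      H₁ (x, y) ^ 2 = Φ₁ x * (σ₁ x + σ₂ y) ∧
      H₂ (x, y) ^ 2 = Φ₂ y * (σ₁ x + σ₂ y) := by
  set u : ℝ × ℝ → ℝ := fun p => Real.log (H₁ p ^ 2) with hu_def
  set v : ℝ × ℝ → ℝ := fun p => Real.log (H₂ p ^ 2) with hv_def
  have hu : ContDiff ℝ (⊤ : ℕ∞) u := (h₁.pow 2).log (fun p => (pow_pos (hpos₁ p) 2).ne')
  have hv : ContDiff ℝ (⊤ : ℕ∞) v := (h₂.pow 2).log (fun p => (pow_pos (hpos₂ p) 2).ne')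
  -- rewrite the Levi-Civita equations
  have key₁ : ∀ x y : ℝ, Dx' (Dy' u) (x, y) + Dy' u (x, y) * Dx' v (x, y) = 0 := by
    intro x y
    have h := hLC₁ x y
    have e1 : (fun u' : ℝ => deriv (fun v' : ℝ => Real.log (H₁ (u', v') ^ 2)) y)
        = fun u' => Dy' u (u', y) := by
      funext u'; exact (hasDerivAt_sliceY hu u' y).deriv
    rw [e1, (hasDerivAt_sliceX (contDiff_Dy hu) x y).deriv,
      (hasDerivAt_sliceY hu x y).deriv, (hasDerivAt_sliceX hv x y).deriv] at h
    exact h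
  have key₂ : ∀ x y : ℝ, Dx' (Dy' v) (x, y) + Dx' v (x, y) * Dy' u (x, y) = 0 := by
    intro x y
    have h := hLC₂ x y
    have e1 : (fun u' : ℝ => deriv (fun v' : ℝ => Real.log (H₂ (u', v') ^ 2)) y)
        = fun u' => Dy' v (u', y) := by
      funext u'; exact (hasDerivAt_sliceY hv u' y).deriv
    rw [e1, (hasDerivAt_sliceX (contDiff_Dy hv) x y).deriv,
      (hasDerivAt_sliceY hu x y).deriv, (hasDerivAt_sliceX hv x y).deriv] at h
    exact h
  -- T = u - v separates additively
  set T : ℝ × ℝ → ℝ := fun p => u p - v p with hT_def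
  have hT : ContDiff ℝ (⊤ : ℕ∞) T := hu.sub hv
  have hDyT : ∀ x y : ℝ, Dy' T (x, y) = Dy' u (x, y) - Dy' v (x, y) := fun x y =>
    (hasDerivAt_sliceY hT x y).unique
      ((hasDerivAt_sliceY hu x y).sub (hasDerivAt_sliceY hv x y))
  have hDxT : ∀ x y : ℝ, Dx' T (x, y) = Dx' u (x, y) - Dx' v (x, y) := fun x y =>
    (hasDerivAt_sliceX hT x y).unique
      ((hasDerivAt_sliceX hu x y).sub (hasDerivAt_sliceX hv x y))
  have hTmix : ∀ x y : ℝ, deriv (fun t : ℝ => deriv (fun s : ℝ => T (t, s)) y) x = 0 := by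
    intro x y
    have e1 : (fun t : ℝ => deriv (fun s : ℝ => T (t, s)) y) = fun t => Dy' T (t, y) := by
      funext t; exact (hasDerivAt_sliceY hT t y).deriv
    rw [e1]
    have e2 : (fun t : ℝ => Dy' T (t, y)) = fun t => Dy' u (t, y) - Dy' v (t, y) := by
      funext t; exact hDyT t y
    rw [e2, ((hasDerivAt_sliceX (contDiff_Dy hu) x y).fun_sub
      (hasDerivAt_sliceX (contDiff_Dy hv) x y)).deriv]
    have := key₁ x y; have := key₂ x y; linarith
  have hTsep : ∀ x y : ℝ, T (x, y) = T (x, 0) + T (0, y) - T (0, 0) :=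
    sep_of_mixed_zero hT hTmix
  -- a(x) = T(x,0), its derivative equals Dx' T (x,y) for every y
  set a : ℝ → ℝ := fun t => T (t, 0) with ha_def
  have ha : ContDiff ℝ (⊤ : ℕ∞) a := hT.comp (contDiff_id.prodMk contDiff_const)
  have hada : ∀ x : ℝ, HasDerivAt a (Dx' T (x, 0)) x := fun x => hasDerivAt_sliceX hT x 0
  have hDxTy : ∀ x y : ℝ, Dx' T (x, y) = Dx' T (x, 0) := by
    intro x y
    refine (hasDerivAt_sliceX hT x y).unique ?_
    have e : (fun t : ℝ => T (t, y)) = fun t => T (t, 0) + (T (0, y) - T (0, 0)) := by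
      funext t; rw [hTsep t y]; ring
    rw [e]
    exact (hasDerivAt_sliceX hT x 0).add_const _
  -- S = exp (u - a)
  set S : ℝ × ℝ → ℝ := fun p => Real.exp (u p - a p.1) with hS_def
  have hS : ContDiff ℝ (⊤ : ℕ∞) S := Real.contDiff_exp.comp (hu.sub (ha.comp contDiff_fst))
  have hSmix : ∀ x y : ℝ, deriv (fun t : ℝ => deriv (fun s : ℝ => S (t, s)) y) x = 0 := by
    intro x y
    have e1 : (fun t : ℝ => deriv (fun s : ℝ => S (t, s)) y)
        = fun t => S (t, y) * Dy' u (t, y) := by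
      funext t
      have h : HasDerivAt (fun s : ℝ => Real.exp (u (t, s) - a t))
          (Real.exp (u (t, y) - a t) * Dy' u (t, y)) y := by
        have := ((hasDerivAt_sliceY hu t y).sub_const (a t)).exp
        simpa using this
      exact h.deriv
    rw [e1]
    have hf1 : HasDerivAt (fun t : ℝ => S (t, y))
        (S (x, y) * (Dx' u (x, y) - Dx' T (x, 0))) x := by
      have := ((hasDerivAt_sliceX hu x y).sub (hada x)).exp
      simpa [hS_def] using this
    have hf2 : HasDerivAt (fun t : ℝ => Dy' u (t, y)) (Dx' (Dy' u) (x, y)) x :=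
      hasDerivAt_sliceX (contDiff_Dy hu) x y
    rw [(hf1.fun_mul hf2).deriv]
    have h1 : Dx' T (x, 0) = Dx' u (x, y) - Dx' v (x, y) := by
      rw [← hDxTy x y]; exact hDxT x y
    have h2 := key₁ x y
    have h3 : Dx' (Dy' u) (x, y) = -(Dy' u (x, y) * Dx' v (x, y)) := by linarith
    rw [h1, h3]; ring
  have hSsep : ∀ x y : ℝ, S (x, y) = S (x, 0) + S (0, y) - S (0, 0) :=
    sep_of_mixed_zero hS hSmix
  refine ⟨fun x => Real.exp (a x), fun y => Real.exp (T (0, 0) - T (0, y)),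
    fun x => S (x, 0) - S (0, 0), fun y => S (0, y), fun x y => ?_⟩
  have hsum : S (x, 0) - S (0, 0) + S (0, y) = S (x, y) := by
    have := hSsep x y; linarith
  constructor
  · rw [hsum]
    have : Real.exp (a x) * S (x, y) = Real.exp (u (x, y)) := by
      rw [hS_def]; simp only []
      rw [← Real.exp_add]; ring_nf
    rw [this, hu_def]
    exact (Real.exp_log (pow_pos (hpos₁ (x, y)) 2)).symm
  · rw [hsum]
    have hv_eq : v (x, y) = u (x, y) - T (x, y) := by rw [hT_def]; ring
    have : Real.exp (T (0, 0) - T (0, y)) * S (x, y) = Real.exp (v (x, y)) := by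
      rw [hS_def]; simp only []
      rw [← Real.exp_add, hv_eq, hTsep x y, ha_def]; ring_nf
    rw [this, hv_def]
    exact (Real.exp_log (pow_pos (hpos₂ (x, y)) 2)).symm
end
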